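/- arXiv:2411.12912 — 6 statements merged into one kernel-verified Lean document; each statement's English description precedes it below -/
import Mathlib

section
/- Let J = AeA be a heredity ideal of a finite-dimensional algebra A generated by an idempotent e. Then the multiplication map Ae ⊗_{eAe} eA → AeA is an isomorphism. -/
open scoped TensorProduct DirectSum

/-- The corner subspace `f·S·e` of an algebra `A`, for `S ⊆ A`. -/
def cornerSpace (k : Type*) [Field k] {A : Type*} [Ring A] [Algebra k A]
    (f e : A) (S : Set A) : Submodule k A :=
  Submodule.span k {x | ∃ a ∈ S, x = f * a * e}

/-- Multiplication, as a linear map on the tensor product of two subspaces of an algebra. -/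
noncomputable def mulTensor (k : Type*) [Field k] {A : Type*} [Ring A] [Algebra k A]
    (M N : Submodule k A) : (M ⊗[k] N) →ₗ[k] A :=
  TensorProduct.lift ((LinearMap.mul k A).domRestrict₁₂ M N)

/-- The multiplication map `⊕_l (e_j·P·e_l) ⊗ (e_l·M·e_i) → A`. -/
noncomputable def reedyMulMap (k : Type*) [Field k] {A : Type*} [Ring A] [Algebra k A]
    {ι : Type*} [Fintype ι] [DecidableEq ι]
    (e : ι → A) (P M : Set A) (j i : ι) :
    (⨁ l : ι, (↥(cornerSpace k (e j) (e l) P) ⊗[k] ↥(cornerSpace k (e l) (e i) M))) →ₗ[k] A :=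
  DirectSum.toModule k ι A fun l =>
    mulTensor k (cornerSpace k (e j) (e l) P) (cornerSpace k (e l) (e i) M)

/-- A Reedy algebra structure on `A`: a complete set of pairwise orthogonal idempotents
`e`, a degree function `deg`, and unital subalgebras `Ap = A⁺`, `Am = A⁻` containing the
idempotents, such that the corners of `A⁺` are upward directed and one-dimensional on the
diagonal, the corners of `A⁻` are downward directed and one-dimensional on the diagonal, and
multiplication induces isomorphisms `⊕_l e_j A⁺ e_l ⊗ e_l A⁻ e_i ≅ e_j A e_i`. -/
structure IsReedy (k : Type*) [Field k] {A : Type*} [Ring A] [Algebra k A]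
    {ι : Type*} [Fintype ι] [DecidableEq ι]
    (e : ι → A) (deg : ι → ℕ) (Ap Am : Subalgebra k A) : Prop where
  idem : ∀ i, IsIdempotentElem (e i)
  orth : ∀ i j, i ≠ j → e i * e j = 0
  complete : ∑ i, e i = 1
  memP : ∀ i, e i ∈ Ap
  memM : ∀ i, e i ∈ Am
  diagP : ∀ i, Module.finrank k (cornerSpace k (e i) (e i) (Ap : Set A)) = 1
  offP : ∀ i j, i ≠ j → cornerSpace k (e j) (e i) (Ap : Set A) ≠ ⊥ → deg i < deg j
  diagM : ∀ i, Module.finrank k (cornerSpace k (e i) (e i) (Am : Set A)) = 1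
  offM : ∀ i j, i ≠ j → cornerSpace k (e j) (e i) (Am : Set A) ≠ ⊥ → deg j < deg i
  mul_inj : ∀ i j, Function.Injective (reedyMulMap k e (Ap : Set A) (Am : Set A) j i)
  mul_range : ∀ i j, LinearMap.range (reedyMulMap k e (Ap : Set A) (Am : Set A) j i)
      = cornerSpace k (e j) (e i) Set.univ
/-- The corner `eAe` of an algebra, as a non-unital subalgebra: the set of elements
fixed under left and right multiplication by `e`. -/
def cornerNonUnitalSubalgebra (k : Type*) [Field k] {A : Type*} [Ring A] [Algebra k A]
    (e : A) : NonUnitalSubalgebra k A where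
  carrier := {x | e * x = x ∧ x * e = x}
  add_mem' := fun ha hb => ⟨by rw [mul_add, ha.1, hb.1], by rw [add_mul, ha.2, hb.2]⟩
  zero_mem' := ⟨mul_zero e, zero_mul e⟩
  mul_mem' := fun ha hb => ⟨by rw [← mul_assoc, ha.1], by rw [mul_assoc, hb.2]⟩
  smul_mem' := fun c x hx => ⟨by rw [mul_smul_comm, hx.1], by rw [smul_mul_assoc, hx.2]⟩

/-- The corner ring `eAe` attached to an idempotent `e` of an algebra `A`. -/
def CornerRing (k : Type*) [Field k] {A : Type*} [Ring A] [Algebra k A]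
    (e : {x : A // IsIdempotentElem x}) : Type _ :=
  ↥(cornerNonUnitalSubalgebra k (e : A))

instance CornerRing.instRing (k : Type*) [Field k] {A : Type*} [Ring A] [Algebra k A]
    (e : {x : A // IsIdempotentElem x}) : Ring (CornerRing k e) :=
  { (inferInstance : NonUnitalRing (cornerNonUnitalSubalgebra k (e : A))) with
    one := ⟨(e : A), e.2, e.2⟩
    one_mul := fun x => Subtype.ext x.2.1
    mul_one := fun x => Subtype.ext x.2.2 }

instance CornerRing.instModule (k : Type*) [Field k] {A : Type*} [Ring A] [Algebra k A]
    (e : {x : A // IsIdempotentElem x}) : Module k (CornerRing k e) :=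
  inferInstanceAs (Module k ↥(cornerNonUnitalSubalgebra k (e : A)))

noncomputable instance CornerRing.instAlgebra (k : Type*) [Field k] {A : Type*} [Ring A]
    [Algebra k A] (e : {x : A // IsIdempotentElem x}) : Algebra k (CornerRing k e) :=
  Algebra.ofModule
    (fun c x y => Subtype.ext (smul_mul_assoc c x.1 y.1))
    (fun c x y => Subtype.ext (mul_smul_comm c x.1 y.1))

/-- The element of the corner ring `eAe` underlying `x : A`, given proofs. -/
def CornerRing.mk (k : Type*) [Field k] {A : Type*} [Ring A] [Algebra k A]
    (e : {x : A // IsIdempotentElem x}) (x : A) (h1 : (e : A) * x = x) (h2 : x * (e : A) = x) :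
    CornerRing k e := ⟨x, h1, h2⟩

variable (k : Type*) [Field k] {A : Type*} [Ring A] [Algebra k A]

/-- The subspace `Ae` of an algebra `A`. -/
def rightMulSpace (e : A) : Submodule k A := Submodule.span k {x | ∃ a : A, x = a * e}

/-- The subspace `eA` of an algebra `A`. -/
def leftMulSpace (e : A) : Submodule k A := Submodule.span k {x | ∃ b : A, x = e * b}

theorem mem_rightMulSpace (e a : A) : a * e ∈ rightMulSpace k e :=
  Submodule.subset_span ⟨a, rfl⟩

theorem mem_leftMulSpace (e b : A) : e * b ∈ leftMulSpace k e :=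
  Submodule.subset_span ⟨b, rfl⟩


theorem rightMul_fix {e : A} (he : IsIdempotentElem e) {u : A}
    (hu : u ∈ rightMulSpace k e) : u * e = u := by
  induction hu using Submodule.span_induction with
  | mem x hx => obtain ⟨a, rfl⟩ := hx; rw [mul_assoc, he]
  | zero => simp
  | add x y _ _ hx hy => rw [add_mul, hx, hy]
  | smul c x _ hx => rw [smul_mul_assoc, hx]

theorem leftMul_fix {e : A} (he : IsIdempotentElem e) {v : A}
    (hv : v ∈ leftMulSpace k e) : e * v = v := by
  induction hv using Submodule.span_induction with
  | mem x hx => obtain ⟨b, rfl⟩ := hx; rw [← mul_assoc, he]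
  | zero => simp
  | add x y _ _ hx hy => rw [mul_add, hx, hy]
  | smul c x _ hx => rw [mul_smul_comm, hx]

theorem mulTensor_tmul (M N : Submodule k A) (u : M) (v : N) :
    mulTensor k M N (u ⊗ₜ[k] v) = (u : A) * (v : A) := rfl

open scoped Pointwise in
/-- If `J = AeA` is a heredity ideal of the finite-dimensional algebra
`A`, then the multiplication map `Ae ⊗_{eAe} eA → AeA` is an isomorphism. Equivalently,
the `k`-linear multiplication map `Ae ⊗ₖ eA → A` has image `AeA` and its kernel is exactly
the subspace generated by the balanced relations `(a·e·x·e) ⊗ (e·b) - (a·e) ⊗ (e·x·e·b)`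
over `eAe`. -/
theorem heredity_ideal_balanced_multiplication
    [FiniteDimensional k A] (e : A) (he : IsIdempotentElem e) (J : Ideal A)
    (hJ : J = Submodule.span A {x | ∃ b : A, x = e * b})
    (hidem : Submodule.span A ((J : Set A) * (J : Set A)) = J)
    (hrad : ∀ x ∈ J, ∀ r ∈ Ideal.jacobson (⊥ : Ideal A), ∀ y ∈ J, x * r * y = 0)
    (hproj : Module.Projective A J) :
    LinearMap.range (mulTensor k (rightMulSpace k e) (leftMulSpace k e))
      = Submodule.span k {x | ∃ a b : A, x = a * e * b} ∧
    LinearMap.ker (mulTensor k (rightMulSpace k e) (leftMulSpace k e))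
      = Submodule.span k {z : ↥(rightMulSpace k e) ⊗[k] ↥(leftMulSpace k e) |
          ∃ a x b : A,
            z = (⟨a * e * x * e, mem_rightMulSpace k e (a * e * x)⟩ : rightMulSpace k e)
                  ⊗ₜ[k] (⟨e * b, mem_leftMulSpace k e b⟩ : leftMulSpace k e)
              - (⟨a * e, mem_rightMulSpace k e a⟩ : rightMulSpace k e)
                  ⊗ₜ[k] (⟨e * (x * (e * b)), mem_leftMulSpace k e (x * (e * b))⟩ :
                    leftMulSpace k e)} := by
  classical
  have hJrs : ∀ b : A, e * b ∈ J := fun b => by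
    rw [hJ]; exact Submodule.subset_span ⟨b, rfl⟩
  have hee : ∀ z : A, e * (e * z) = e * z := fun z => by rw [← mul_assoc, he]
  constructor
  · -- range computation
    apply le_antisymm
    · rintro _ ⟨t, rfl⟩
      induction t using TensorProduct.induction_on with
      | zero => simp
      | tmul u v =>
        refine Submodule.subset_span ⟨(u : A), (v : A), ?_⟩
        rw [mulTensor_tmul, rightMul_fix k he u.2]
      | add x y hx hy => rw [map_add]; exact Submodule.add_mem _ hx hy
    · rw [Submodule.span_le]
      rintro _ ⟨a, b, rfl⟩
      refine ⟨(⟨a * e, mem_rightMulSpace k e a⟩ : rightMulSpace k e) ⊗ₜ[k]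
        (⟨e * b, mem_leftMulSpace k e b⟩ : leftMulSpace k e), ?_⟩
      rw [mulTensor_tmul]
      show a * e * (e * b) = a * e * b
      rw [mul_assoc a e (e*b), hee, ← mul_assoc]
  · -- kernel computation
    haveI := hproj
    set B := Module.finBasis k A with hB
    -- the surjection π : (ι → A) → J
    obtain ⟨π, hπ⟩ : ∃ π : (Fin (Module.finrank k A) → A) →ₗ[A] ↥J,
        ∀ y, ((π y : A)) = ∑ i, y i * (e * B i) := by
      refine ⟨LinearMap.mk (AddHom.mk (fun y => ⟨∑ i, y i * (e * B i),
          Submodule.sum_mem J fun i _ => J.smul_mem (y i) (hJrs (B i))⟩) ?_) ?_,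
        fun y => rfl⟩
      · intro y z; apply Subtype.ext
        show ∑ i, (y i + z i) * (e * B i) = _
        simp [add_mul, Finset.sum_add_distrib]
      · intro a y; apply Subtype.ext
        show ∑ i, (a * y i) * (e * B i) = a * ∑ i, y i * (e * B i)
        simp [Finset.mul_sum, mul_assoc]
    have hπs : Function.Surjective π := by
      intro x
      have hx : (x : A) ∈ Submodule.span A {z | ∃ b : A, z = e * b} := by
        rw [← hJ]; exact x.2
      have main : ∀ z, z ∈ Submodule.span A {z | ∃ b : A, z = e * b} →
          ∃ y, ((π y : A)) = z := by
        intro z hz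
        induction hz using Submodule.span_induction with
        | mem w hw =>
          obtain ⟨b, rfl⟩ := hw
          refine ⟨fun i => algebraMap k A (B.repr b i), ?_⟩
          rw [hπ]
          calc ∑ i, algebraMap k A (B.repr b i) * (e * B i)
              = ∑ i, e * (B.repr b i • B i) := by
                refine Finset.sum_congr rfl fun i _ => ?_
                rw [← Algebra.smul_def, mul_smul_comm]
            _ = e * ∑ i, B.repr b i • B i := by rw [Finset.mul_sum]
            _ = e * b := by rw [B.sum_repr b]
        | zero => exact ⟨0, by rw [hπ]; simp⟩
        | add x y _ _ hx hy =>
          obtain ⟨yx, hyx⟩ := hx; obtain ⟨yy, hyy⟩ := hy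
          exact ⟨yx + yy, by rw [map_add]; push_cast [hyx, hyy]; rfl⟩
        | smul a z _ hz =>
          obtain ⟨y, hy⟩ := hz
          refine ⟨a • y, ?_⟩
          rw [map_smul]
          show a • ((π y : A)) = a • z
          rw [hy]
      obtain ⟨y, hy⟩ := main x hx
      exact ⟨y, Subtype.ext hy⟩
    obtain ⟨σ, hσc⟩ := Module.projective_lifting_property π LinearMap.id hπs
    have hσ : ∀ x : ↥J, π (σ x) = x := fun x => by
      have := LinearMap.congr_fun hσc x
      simpa using this
    -- the section s : J → Ae ⊗ eA
    obtain ⟨s, hs⟩ : ∃ s : ↥J →ₗ[k] (↥(rightMulSpace k e) ⊗[k] ↥(leftMulSpace k e)),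
        ∀ x, s x = ∑ i, (⟨σ x i * e, mem_rightMulSpace k e (σ x i)⟩ : rightMulSpace k e)
          ⊗ₜ[k] (⟨e * B i, mem_leftMulSpace k e (B i)⟩ : leftMulSpace k e) := by
      refine ⟨LinearMap.mk (AddHom.mk (fun x => ∑ i,
          (⟨σ x i * e, mem_rightMulSpace k e (σ x i)⟩ : rightMulSpace k e)
          ⊗ₜ[k] (⟨e * B i, mem_leftMulSpace k e (B i)⟩ : leftMulSpace k e)) ?_) ?_,
        fun x => rfl⟩
      · intro x y
        rw [← Finset.sum_add_distrib]
        refine Finset.sum_congr rfl fun i _ => ?_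
        rw [← TensorProduct.add_tmul]
        congr 1
        apply Subtype.ext
        show σ (x + y) i * e = σ x i * e + σ y i * e
        rw [map_add, Pi.add_apply, add_mul]
      · intro c x
        dsimp only
        rw [RingHom.id_apply, Finset.smul_sum]
        refine Finset.sum_congr rfl fun i _ => ?_
        rw [TensorProduct.smul_tmul']
        congr 1
        apply Subtype.ext
        show σ (c • x) i * e = c • (σ x i * e)
        have h1 : (c • x : ↥J) = (algebraMap k A c) • x := (algebraMap_smul A c x).symm
        rw [h1, map_smul, Pi.smul_apply, smul_eq_mul, mul_assoc, ← Algebra.smul_def]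
    -- μ lands in J
    have hmu_mem : ∀ t : ↥(rightMulSpace k e) ⊗[k] ↥(leftMulSpace k e),
        mulTensor k (rightMulSpace k e) (leftMulSpace k e) t ∈ J := by
      intro t
      have ht : t ∈ Submodule.span k {z | ∃ u v, u ⊗ₜ[k] v = z} := by
        rw [TensorProduct.span_tmul_eq_top]; trivial
      induction ht using Submodule.span_induction with
      | mem z hz =>
        obtain ⟨u, v, rfl⟩ := hz
        rw [mulTensor_tmul]
        have hv : (v : A) ∈ J := by
          rw [← leftMul_fix k he v.2]; exact hJrs _
        exact J.smul_mem _ hv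
      | zero => simp
      | add x y _ _ hx hy => rw [map_add]; exact J.add_mem hx hy
      | smul c x _ hx => rw [map_smul]; exact Submodule.smul_of_tower_mem J c hx
    obtain ⟨ν, hν⟩ : ∃ ν : ↥(rightMulSpace k e) ⊗[k] ↥(leftMulSpace k e) →ₗ[k] ↥J,
        ∀ t, (ν t : A) = mulTensor k (rightMulSpace k e) (leftMulSpace k e) t := by
      refine ⟨LinearMap.mk (AddHom.mk
          (fun t => ⟨mulTensor k (rightMulSpace k e) (leftMulSpace k e) t, hmu_mem t⟩)
          (fun x y => Subtype.ext (map_add _ x y)))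
          (fun c t => Subtype.ext (map_smul _ c t)), fun t => rfl⟩
    set K := Submodule.span k {z : ↥(rightMulSpace k e) ⊗[k] ↥(leftMulSpace k e) |
          ∃ a x b : A,
            z = (⟨a * e * x * e, mem_rightMulSpace k e (a * e * x)⟩ : rightMulSpace k e)
                  ⊗ₜ[k] (⟨e * b, mem_leftMulSpace k e b⟩ : leftMulSpace k e)
              - (⟨a * e, mem_rightMulSpace k e a⟩ : rightMulSpace k e)
                  ⊗ₜ[k] (⟨e * (x * (e * b)), mem_leftMulSpace k e (x * (e * b))⟩ :
                    leftMulSpace k e)} with hK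
    -- the key estimate : s ∘ ν ≡ id mod K
    have hkey : ∀ t : ↥(rightMulSpace k e) ⊗[k] ↥(leftMulSpace k e), s (ν t) - t ∈ K := by
      intro t
      have ht : t ∈ Submodule.span k {z | ∃ u v, u ⊗ₜ[k] v = z} := by
        rw [TensorProduct.span_tmul_eq_top]; trivial
      induction ht using Submodule.span_induction with
      | zero => simp only [map_zero, sub_zero]; exact K.zero_mem
      | add x y _ _ hx hy =>
        have : s (ν (x + y)) - (x + y) = (s (ν x) - x) + (s (ν y) - y) := by
          rw [map_add, map_add]; abel
        rw [this]; exact K.add_mem hx hy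
      | smul c x _ hx =>
        have : s (ν (c • x)) - c • x = c • (s (ν x) - x) := by
          rw [map_smul, map_smul, smul_sub]
        rw [this]; exact K.smul_mem c hx
      | mem z hz =>
        obtain ⟨u, v, rfl⟩ := hz
        have hu : (u : A) * e = u := rightMul_fix k he u.2
        have hv : e * (v : A) = v := leftMul_fix k he v.2
        have hvJ : (v : A) ∈ J := by rw [← hv]; exact hJrs _
        have hν1 : ν (u ⊗ₜ[k] v) = (u : A) • (⟨(v : A), hvJ⟩ : ↥J) := by
          apply Subtype.ext
          rw [hν, mulTensor_tmul]; rfl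
        have hσy : ∀ i, σ (ν (u ⊗ₜ[k] v)) i = (u : A) * σ (⟨(v : A), hvJ⟩ : ↥J) i := by
          intro i; rw [hν1, map_smul]; rfl
        set c : Fin (Module.finrank k A) → A := fun i => σ (⟨(v : A), hvJ⟩ : ↥J) i with hc
        have h1 : ∑ i, c i * (e * B i) = (v : A) := by
          have h2 := congrArg (Subtype.val) (hσ (⟨(v : A), hvJ⟩ : ↥J))
          rw [hπ] at h2
          exact h2
        have hsum : ∑ i, e * (c i * (e * B i)) = (v : A) := by
          rw [← Finset.mul_sum, h1, hv]
        have hs2 : s (ν (u ⊗ₜ[k] v)) = ∑ i,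
            (⟨(u : A) * e * c i * e, mem_rightMulSpace k e ((u : A) * e * c i)⟩ :
              rightMulSpace k e)
            ⊗ₜ[k] (⟨e * B i, mem_leftMulSpace k e (B i)⟩ : leftMulSpace k e) := by
          rw [hs]
          refine Finset.sum_congr rfl fun i _ => ?_
          congr 1
          apply Subtype.ext
          show σ (ν (u ⊗ₜ[k] v)) i * e = (u : A) * e * c i * e
          rw [hσy i, hu]
        have hsplit : s (ν (u ⊗ₜ[k] v)) - u ⊗ₜ[k] v = ∑ i,
            ((⟨(u : A) * e * c i * e, mem_rightMulSpace k e ((u : A) * e * c i)⟩ :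
                rightMulSpace k e)
              ⊗ₜ[k] (⟨e * B i, mem_leftMulSpace k e (B i)⟩ : leftMulSpace k e)
            - (⟨(u : A) * e, mem_rightMulSpace k e (u : A)⟩ : rightMulSpace k e)
              ⊗ₜ[k] (⟨e * (c i * (e * B i)), mem_leftMulSpace k e (c i * (e * B i))⟩ :
                leftMulSpace k e)) := by
          rw [Finset.sum_sub_distrib (G := ↥(rightMulSpace k e) ⊗[k] ↥(leftMulSpace k e)), ← hs2]
          congr 1
          rw [← TensorProduct.tmul_sum]
          congr 1
          · exact Subtype.ext hu.symm
          · apply Subtype.ext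
            show (v : A) = ((∑ i, (⟨e * (c i * (e * B i)),
              mem_leftMulSpace k e (c i * (e * B i))⟩ : leftMulSpace k e) : leftMulSpace k e) : A)
            rw [← hsum, Submodule.coe_sum]
        rw [hsplit]
        exact Submodule.sum_mem K fun i _ => Submodule.subset_span ⟨(u : A), c i, B i, rfl⟩
    apply le_antisymm
    · -- ker ⊆ K
      intro t ht
      rw [LinearMap.mem_ker] at ht
      have h0 : ν t = 0 := Subtype.ext (by rw [hν, ht]; rfl)
      have h2 := hkey t
      rw [h0, map_zero, zero_sub (G := ↥(rightMulSpace k e) ⊗[k] ↥(leftMulSpace k e))] at h2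
      exact (K.neg_mem_iff (x := t)).mp h2
    · -- K ⊆ ker
      rw [hK, Submodule.span_le]
      rintro _ ⟨a, x, b, rfl⟩
      rw [SetLike.mem_coe, LinearMap.mem_ker, map_sub, mulTensor_tmul, mulTensor_tmul]
      show a * e * x * e * (e * b) - a * e * (e * (x * (e * b))) = 0
      rw [mul_assoc (a * e * x) e (e * b), hee, ← mul_assoc (a * e) e (x * (e * b)),
        mul_assoc a e e, he, mul_assoc (a * e) x (e * b), sub_self]
end

section
/- Let (A, A⁺, A⁻) be a Reedy algebra and e = ε₀ + ε₁ + ⋯ + εₗ the sum of all idempotents of degree at most l. Then (eAe, eA⁺e, eA⁻e) is a Reedy algebra, with degree function the restriction of that of A to the idempotents of degree at most l. -/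
open scoped TensorProduct DirectSum

/-- The corner `eBe` of a subalgebra `B` of `A` (with `e ∈ B`), as a subalgebra of the
corner ring `eAe`. -/
def cornerSubalgOf (k : Type*) [Field k] {A : Type*} [Ring A] [Algebra k A]
    (e : {x : A // IsIdempotentElem x}) (B : Subalgebra k A) (he : (e : A) ∈ B) :
    Subalgebra k (CornerRing k e) where
  carrier := {x | x.1 ∈ B}
  mul_mem' := fun hx hy => B.mul_mem hx hy
  add_mem' := fun hx hy => B.add_mem hx hy
  one_mem' := he
  zero_mem' := B.zero_mem
  algebraMap_mem' := fun c => by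
    have h1 : (algebraMap k (CornerRing k e) c) = c • (1 : CornerRing k e) :=
      Algebra.algebraMap_eq_smul_one c
    show (algebraMap k (CornerRing k e) c).1 ∈ B
    rw [h1]
    exact B.smul_mem he c

section AuxCorner

variable (k : Type*) [Field k] {A : Type*} [Ring A] [Algebra k A]
  (ε : {x : A // IsIdempotentElem x})

/-- The inclusion of the corner ring into the ambient algebra, as a linear map. -/
def cornerVal : CornerRing k ε →ₗ[k] A where
  toFun := Subtype.val
  map_add' _ _ := rfl
  map_smul' _ _ := rfl

lemma cornerVal_injective : Function.Injective (cornerVal k ε) := Subtype.val_injective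

@[simp] lemma cornerVal_apply (x : CornerRing k ε) : cornerVal k ε x = x.1 := rfl

@[simp] lemma cornerVal_mul (x y : CornerRing k ε) :
    cornerVal k ε (x * y) = cornerVal k ε x * cornerVal k ε y := rfl

lemma map_cornerSpace (f g : CornerRing k ε) (SC : Set (CornerRing k ε)) (SA : Set A)
    (h1 : ∀ x ∈ SC, x.1 ∈ SA)
    (h2 : ∀ b ∈ SA, ∃ c ∈ SC, c.1 = ε.1 * b * ε.1) :
    Submodule.map (cornerVal k ε) (cornerSpace k f g SC) = cornerSpace k f.1 g.1 SA := by
  unfold cornerSpace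
  rw [Submodule.map_span]
  congr 1
  ext y
  constructor
  · rintro ⟨x, ⟨a, ha, rfl⟩, rfl⟩
    exact ⟨a.1, h1 a ha, rfl⟩
  · rintro ⟨b, hb, rfl⟩
    obtain ⟨c, hc, hcv⟩ := h2 b hb
    refine ⟨f * c * g, ⟨c, hc, rfl⟩, ?_⟩
    show (f * c * g).1 = _
    show f.1 * c.1 * g.1 = _
    rw [hcv, ← mul_assoc, ← mul_assoc, f.2.2, mul_assoc, g.2.1]

end AuxCorner

section AbstractTransport

variable {k : Type*} [Field k] {ι : Type*} [DecidableEq ι] {p : ι → Prop} [DecidablePred p]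
  {F : Subtype p → Type*} {G : ι → Type*}
  [∀ s, AddCommMonoid (F s)] [∀ s, Module k (F s)]
  [∀ t, AddCommMonoid (G t)] [∀ t, Module k (G t)]
  {C A : Type*} [AddCommGroup C] [Module k C] [AddCommGroup A] [Module k A]

/-- The equivalence of a submodule with its image under an injective map, composed with
an identification of the image. -/
noncomputable def mapEquiv (v : C →ₗ[k] A) (hv : Function.Injective v)
    {N : Submodule k C} {Q : Submodule k A} (hNQ : Submodule.map v N = Q) :
    N ≃ₗ[k] Q :=
  (Submodule.equivMapOfInjective v hv N).trans (LinearEquiv.ofEq _ _ hNQ)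

@[simp] lemma mapEquiv_coe (v : C →ₗ[k] A) (hv : Function.Injective v)
    {N : Submodule k C} {Q : Submodule k A} (hNQ : Submodule.map v N = Q) (x : N) :
    (mapEquiv v hv hNQ x : A) = v x := rfl

/-- The inclusion of a direct sum over a subtype into a direct sum over the full index
type, twisted by componentwise equivalences. -/
noncomputable def psiMap (φ : ∀ s : Subtype p, F s ≃ₗ[k] G s.1) :
    (⨁ s, F s) →ₗ[k] (⨁ t, G t) :=
  DirectSum.toModule k _ _ fun s => (DirectSum.lof k ι G s.1).comp (φ s).toLinearMap

/-- The projection inverse to `psiMap`. -/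
noncomputable def psiInv (φ : ∀ s : Subtype p, F s ≃ₗ[k] G s.1) :
    (⨁ t, G t) →ₗ[k] (⨁ s, F s) :=
  DirectSum.toModule k _ _ fun t =>
    if h : p t then
      (DirectSum.lof k _ F ⟨t, h⟩).comp (φ ⟨t, h⟩).symm.toLinearMap
    else 0

lemma psiInv_comp_psiMap (φ : ∀ s : Subtype p, F s ≃ₗ[k] G s.1) :
    (psiInv φ).comp (psiMap φ) = LinearMap.id := by
  apply DirectSum.linearMap_ext
  intro s
  ext x
  simp only [psiMap, psiInv, LinearMap.comp_apply, DirectSum.toModule_lof,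
    LinearEquiv.coe_toLinearMap, LinearMap.id_apply]
  rw [dif_pos s.2]
  simp only [LinearMap.comp_apply, LinearEquiv.coe_toLinearMap]
  exact congrArg (fun z => DirectSum.lof k (Subtype p) F s z _) (LinearEquiv.symm_apply_apply (φ s) x)

lemma psiMap_injective (φ : ∀ s : Subtype p, F s ≃ₗ[k] G s.1) :
    Function.Injective (psiMap φ) :=
  Function.LeftInverse.injective (g := psiInv φ) fun x => by
    rw [← LinearMap.comp_apply, psiInv_comp_psiMap]; rfl

lemma transport_inj (φ : ∀ s : Subtype p, F s ≃ₗ[k] G s.1)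
    (v : C →ₗ[k] A) (hv : Function.Injective v)
    (fC : (⨁ s, F s) →ₗ[k] C) (fA : (⨁ t, G t) →ₗ[k] A)
    (hcomm : v.comp fC = fA.comp (psiMap φ)) (hfA : Function.Injective fA) :
    Function.Injective fC := by
  intro a b hab
  have h2 : (fA.comp (psiMap φ)) a = (fA.comp (psiMap φ)) b := by
    rw [← hcomm]; simp only [LinearMap.comp_apply, hab]
  exact psiMap_injective φ (hfA h2)

lemma transport_range (φ : ∀ s : Subtype p, F s ≃ₗ[k] G s.1)
    (v : C →ₗ[k] A)
    (fC : (⨁ s, F s) →ₗ[k] C) (fA : (⨁ t, G t) →ₗ[k] A)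
    (hcomm : v.comp fC = fA.comp (psiMap φ))
    (hbad : ∀ t, ¬ p t → Subsingleton (G t)) :
    Submodule.map v (LinearMap.range fC) = LinearMap.range fA := by
  rw [← LinearMap.range_comp, hcomm, LinearMap.range_comp]
  apply le_antisymm LinearMap.map_le_range
  have hfact : fA.comp ((psiMap φ).comp (psiInv φ)) = fA := by
    apply DirectSum.linearMap_ext
    intro t
    ext x
    by_cases hpt : p t
    · simp only [psiMap, psiInv, LinearMap.comp_apply, DirectSum.toModule_lof]
      rw [dif_pos hpt]
      simp only [LinearMap.comp_apply, LinearEquiv.coe_toLinearMap, DirectSum.toModule_lof,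
        LinearEquiv.apply_symm_apply]
    · haveI := hbad t hpt
      rw [Subsingleton.elim x 0]
      simp
  rintro - ⟨x, rfl⟩
  exact ⟨psiMap φ (psiInv φ x), ⟨psiInv φ x, rfl⟩, LinearMap.congr_fun hfact x⟩

end AbstractTransport

set_option maxHeartbeats 800000

/-- If `(A, A⁺, A⁻)` is Reedy and `e = ε₀ + ⋯ + εₗ` is the sum of all
idempotents of degree at most `l`, then `(eAe, eA⁺e, eA⁻e)` is a Reedy algebra with the
restricted idempotents and degree function. -/
theorem reedy_corner_is_reedy
    (k : Type*) [Field k] (A : Type*) [Ring A] [Algebra k A] [FiniteDimensional k A]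
    {ι : Type*} [Fintype ι] [DecidableEq ι]
    (e : ι → A) (deg : ι → ℕ) (Ap Am : Subalgebra k A)
    (h : IsReedy k e deg Ap Am) (l : ℕ)
    (ε : A) (hεdef : ε = ∑ i : {i : ι // deg i ≤ l}, e i.1)
    (hε : IsIdempotentElem ε) (hP : ε ∈ Ap) (hM : ε ∈ Am) :
    ∃ e' : {i : ι // deg i ≤ l} → CornerRing k ⟨ε, hε⟩,
      (∀ i, (e' i).1 = e i.1) ∧
      IsReedy k e' (fun i => deg i.1)
        (cornerSubalgOf k ⟨ε, hε⟩ Ap hP) (cornerSubalgOf k ⟨ε, hε⟩ Am hM) := by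
  classical
  have hle : ∀ i : {i : ι // deg i ≤ l}, ε * e i.1 = e i.1 ∧ e i.1 * ε = e i.1 := by
    intro i
    constructor
    · rw [hεdef, Finset.sum_mul, Finset.sum_eq_single i]
      · exact h.idem i.1
      · exact fun j _ hj => h.orth j.1 i.1 fun hh => hj (Subtype.ext hh)
      · exact fun hi => absurd (Finset.mem_univ i) hi
    · rw [hεdef, Finset.mul_sum, Finset.sum_eq_single i]
      · exact h.idem i.1
      · exact fun j _ hj => h.orth i.1 j.1 fun hh => hj (Subtype.ext hh.symm)
      · exact fun hi => absurd (Finset.mem_univ i) hi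
  set e' : {i : ι // deg i ≤ l} → CornerRing k ⟨ε, hε⟩ :=
    fun i => ⟨e i.1, (hle i).1, (hle i).2⟩ with he'
  refine ⟨e', fun i => rfl, ?_⟩
  have vinj : Function.Injective (cornerVal k (⟨ε, hε⟩ : {x : A // IsIdempotentElem x})) :=
    cornerVal_injective k _
  have mkmem : ∀ b : A, ε * (ε * b * ε) = ε * b * ε ∧ (ε * b * ε) * ε = ε * b * ε := by
    intro b
    constructor
    · rw [← mul_assoc, ← mul_assoc, hε]
    · rw [mul_assoc, hε]
  have mapP : ∀ a b, Submodule.map (cornerVal k ⟨ε, hε⟩)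
        (cornerSpace k (e' a) (e' b) ((cornerSubalgOf k ⟨ε, hε⟩ Ap hP : Subalgebra k _) : Set _))
      = cornerSpace k (e a.1) (e b.1) (Ap : Set A) := by
    intro a b
    apply map_cornerSpace
    · exact fun x hx => hx
    · exact fun c hc => ⟨⟨ε * c * ε, (mkmem c).1, (mkmem c).2⟩,
        Ap.mul_mem (Ap.mul_mem hP hc) hP, rfl⟩
  have mapM : ∀ a b, Submodule.map (cornerVal k ⟨ε, hε⟩)
        (cornerSpace k (e' a) (e' b) ((cornerSubalgOf k ⟨ε, hε⟩ Am hM : Subalgebra k _) : Set _))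
      = cornerSpace k (e a.1) (e b.1) (Am : Set A) := by
    intro a b
    apply map_cornerSpace
    · exact fun x hx => hx
    · exact fun c hc => ⟨⟨ε * c * ε, (mkmem c).1, (mkmem c).2⟩,
        Am.mul_mem (Am.mul_mem hM hc) hM, rfl⟩
  have mapU : ∀ a b, Submodule.map (cornerVal k ⟨ε, hε⟩)
        (cornerSpace k (e' a) (e' b) (Set.univ : Set (CornerRing k ⟨ε, hε⟩)))
      = cornerSpace k (e a.1) (e b.1) (Set.univ : Set A) := by
    intro a b
    apply map_cornerSpace
    · exact fun x _ => trivial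
    · exact fun c _ => ⟨⟨ε * c * ε, (mkmem c).1, (mkmem c).2⟩, trivial, rfl⟩
  have hbot : ∀ (j : {i : ι // deg i ≤ l}) (t : ι), ¬ deg t ≤ l →
      cornerSpace k (e j.1) (e t) (Ap : Set A) = ⊥ := by
    intro j t ht
    by_contra hne
    have htj : t ≠ j.1 := fun hh => ht (hh ▸ j.2)
    exact ht (le_of_lt (lt_of_lt_of_le (h.offP t j.1 htj hne) j.2))
  have key : ∀ i j : {i : ι // deg i ≤ l},
      Function.Injective (reedyMulMap k e'
        ((cornerSubalgOf k ⟨ε, hε⟩ Ap hP : Subalgebra k _) : Set _)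
        ((cornerSubalgOf k ⟨ε, hε⟩ Am hM : Subalgebra k _) : Set _) j i) ∧
      LinearMap.range (reedyMulMap k e'
        ((cornerSubalgOf k ⟨ε, hε⟩ Ap hP : Subalgebra k _) : Set _)
        ((cornerSubalgOf k ⟨ε, hε⟩ Am hM : Subalgebra k _) : Set _) j i)
        = cornerSpace k (e' j) (e' i) Set.univ := by
    intro i j
    have hcomm : (cornerVal k (⟨ε, hε⟩ : {x : A // IsIdempotentElem x})).comp
          (reedyMulMap k e'
            ((cornerSubalgOf k ⟨ε, hε⟩ Ap hP : Subalgebra k _) : Set _)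
            ((cornerSubalgOf k ⟨ε, hε⟩ Am hM : Subalgebra k _) : Set _) j i)
        = (reedyMulMap k e (Ap : Set A) (Am : Set A) j.1 i.1).comp
            (psiMap (fun s => TensorProduct.congr
              (mapEquiv (cornerVal k ⟨ε, hε⟩) vinj (mapP j s))
              (mapEquiv (cornerVal k ⟨ε, hε⟩) vinj (mapM s i)))) := by
      apply DirectSum.linearMap_ext
      intro s
      apply TensorProduct.ext'
      intro x y
      simp only [LinearMap.comp_apply, reedyMulMap, mulTensor, psiMap, DirectSum.toModule_lof,
        LinearEquiv.coe_toLinearMap, TensorProduct.congr_tmul, TensorProduct.lift.tmul,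
        LinearMap.domRestrict₁₂_apply, LinearMap.mul_apply', cornerVal_apply, mapEquiv_coe]
      rfl
    have hbadG : ∀ t : ι, ¬ deg t ≤ l →
        Subsingleton (↥(cornerSpace k (e j.1) (e t) (Ap : Set A)) ⊗[k]
          ↥(cornerSpace k (e t) (e i.1) (Am : Set A))) := by
      intro t ht
      haveI : Subsingleton ↥(cornerSpace k (e j.1) (e t) (Ap : Set A)) := by
        rw [hbot j t ht]; infer_instance
      infer_instance
    refine ⟨transport_inj _ (cornerVal k ⟨ε, hε⟩) vinj _ _ hcomm (h.mul_inj i.1 j.1), ?_⟩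
    apply Submodule.map_injective_of_injective vinj
    rw [transport_range _ (cornerVal k ⟨ε, hε⟩) _ _ hcomm hbadG, h.mul_range i.1 j.1, mapU j i]
  constructor
  · exact fun i => Subtype.ext (h.idem i.1)
  · exact fun i j hij => Subtype.ext (h.orth i.1 j.1 fun hh => hij (Subtype.ext hh))
  · apply vinj
    rw [map_sum]
    show (∑ i : {i : ι // deg i ≤ l}, e i.1) = ε
    exact hεdef.symm
  · exact fun i => h.memP i.1
  · exact fun i => h.memM i.1
  · intro i
    rw [((Submodule.equivMapOfInjective (cornerVal k ⟨ε, hε⟩) vinj _).trans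
      (LinearEquiv.ofEq _ _ (mapP i i))).finrank_eq]
    exact h.diagP i.1
  · intro i j hij hne
    refine h.offP i.1 j.1 (fun hh => hij (Subtype.ext hh)) fun hbot' => hne ?_
    apply Submodule.map_injective_of_injective vinj
    rw [mapP j i, hbot', Submodule.map_bot]
  · intro i
    rw [((Submodule.equivMapOfInjective (cornerVal k ⟨ε, hε⟩) vinj _).trans
      (LinearEquiv.ofEq _ _ (mapM i i))).finrank_eq]
    exact h.diagM i.1
  · intro i j hij hne
    refine h.offM i.1 j.1 (fun hh => hij (Subtype.ext hh)) fun hbot' => hne ?_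
    apply Submodule.map_injective_of_injective vinj
    rw [mapM j i, hbot', Submodule.map_bot]
  · exact fun i j => (key i j).1
  · exact fun i j => (key i j).2
end

section
/- Let (A, A⁺, A⁻) be a Reedy algebra and e = ε₀ + ⋯ + εₗ. Then (A/AeA, A⁺/A⁺eA⁺, A⁻/A⁻eA⁻) is a Reedy algebra, where the canonical maps A⁺/A⁺eA⁺ → A/AeA and A⁻/A⁻eA⁻ → A/AeA are injective and the degree function is inherited from A. -/
open scoped TensorProduct DirectSum

/-- The relation on an algebra whose ring quotient is the quotient by the two-sided ideal
generated by `ε`. -/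
def idealRel {A : Type*} [Ring A] (ε : A) : A → A → Prop :=
  fun a b => b = 0 ∧ ∃ x y : A, a = x * ε * y


namespace ReedyQ

section Isub

variable (k : Type*) [Field k] {A : Type*} [Ring A] [Algebra k A]

/-- The two-sided ideal generated by `ε`, as a `k`-submodule. -/
def Isub (ε : A) : Submodule k A := Submodule.span k {x | ∃ u v, x = u * ε * v}

variable {k}

lemma mul_mem_Isub (ε : A) (u v : A) {x : A} (hx : x ∈ Isub k ε) :
    u * x * v ∈ Isub k ε := by
  induction hx using Submodule.span_induction with
  | mem y hy =>
    obtain ⟨a, b, rfl⟩ := hy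
    exact Submodule.subset_span ⟨u * a, b * v, by noncomm_ring⟩
  | zero => simpa using (Isub k ε).zero_mem
  | add a b _ _ ha hb => simpa [mul_add, add_mul] using add_mem ha hb
  | smul c a _ ha => simpa [mul_smul_comm, smul_mul_assoc] using
      Submodule.smul_mem _ c ha

lemma eps_mem_Isub (ε : A) : ε ∈ Isub k ε :=
  Submodule.subset_span ⟨1, 1, by simp⟩

/-- The ring congruence attached to the two-sided ideal generated by `ε`. -/
def Icon (ε : A) : RingCon A where
  r a b := a - b ∈ Isub k ε
  iseqv := ⟨fun a => by simp, fun h => by simpa using neg_mem h,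
    fun h1 h2 => by simpa using add_mem h1 h2⟩
  add' := fun h1 h2 => by simpa [add_sub_add_comm] using add_mem h1 h2
  mul' := by
    intro a b c d h1 h2
    have key : a * c - b * d = a * (c - d) * 1 + (a - b) * d := by noncomm_ring
    show a * c - b * d ∈ Isub k ε
    rw [key]
    exact add_mem (mul_mem_Isub ε a 1 h2)
      (by simpa using mul_mem_Isub ε 1 d h1)

lemma mkAlgHom_eq_zero_iff (ε : A) (a : A) :
    RingQuot.mkAlgHom k (idealRel ε) a = 0 ↔ a ∈ Isub k ε := by
  constructor
  · intro hza
    have hcoe : ∀ x : A, RingQuot.mkAlgHom k (idealRel ε) x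
        = RingQuot.mkRingHom (idealRel ε) x := fun x => by
      rw [← RingQuot.mkAlgHom_coe k (idealRel ε)]; rfl
    have w : ∀ ⦃x y : A⦄, idealRel ε x y → (Icon (k := k) ε).mk' x = (Icon ε).mk' y := by
      rintro x y ⟨rfl, u, v, rfl⟩
      refine (RingCon.eq _).2 ?_
      show u * ε * v - 0 ∈ Isub k ε
      simpa using mul_mem_Isub ε u v (eps_mem_Isub ε)
    have h0 : RingQuot.mkRingHom (idealRel ε) a = RingQuot.mkRingHom (idealRel ε) 0 := by
      rw [← hcoe, ← hcoe, hza, map_zero]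
    have := congrArg (RingQuot.lift ⟨(Icon (k := k) ε).mk', w⟩) h0
    rw [RingQuot.lift_mkRingHom_apply, RingQuot.lift_mkRingHom_apply] at this
    have h2 : a - 0 ∈ Isub k ε := (RingCon.eq _).1 this
    simpa using h2
  · intro ha
    induction ha using Submodule.span_induction with
    | mem y hy =>
      obtain ⟨u, v, rfl⟩ := hy
      have : RingQuot.mkAlgHom k (idealRel ε) (u * ε * v)
          = RingQuot.mkAlgHom k (idealRel ε) 0 :=
        RingQuot.mkAlgHom_rel k ⟨rfl, u, v, rfl⟩
      simpa using this
    | zero => simp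
    | add a b _ _ ha hb => rw [map_add, ha, hb, add_zero]
    | smul c a _ ha => rw [map_smul, ha, smul_zero]

end Isub

section Corner

variable {k : Type*} [Field k] {A : Type*} [Ring A] [Algebra k A]

variable (k) in
/-- Two-sided multiplication `x ↦ f * x * g` as a linear map. -/
def mulLR (f g : A) : A →ₗ[k] A := LinearMap.mulRight k g ∘ₗ LinearMap.mulLeft k f

@[simp] lemma mulLR_apply (f g x : A) : mulLR k f g x = f * x * g := rfl

lemma cornerSpace_eq_map (f g : A) (S : Set A) :
    cornerSpace k f g S = Submodule.map (mulLR k f g) (Submodule.span k S) := by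
  rw [Submodule.map_span]
  unfold cornerSpace
  congr 1
  ext x
  constructor
  · rintro ⟨a, ha, rfl⟩; exact ⟨a, ha, rfl⟩
  · rintro ⟨a, ha, rfl⟩; exact ⟨a, ha, rfl⟩

lemma span_coe_subalgebra (B : Subalgebra k A) :
    Submodule.span k (B : Set A) = Subalgebra.toSubmodule B := by
  rw [← Subalgebra.coe_toSubmodule, Submodule.span_eq]

lemma mem_corner_subalgebra {f g : A} {B : Subalgebra k A} {x : A} :
    x ∈ cornerSpace k f g (B : Set A) ↔ ∃ a ∈ B, x = f * a * g := by
  rw [cornerSpace_eq_map, span_coe_subalgebra]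
  constructor
  · rintro ⟨a, ha, rfl⟩; exact ⟨a, ha, rfl⟩
  · rintro ⟨a, ha, rfl⟩; exact ⟨a, ha, rfl⟩

lemma mem_corner_univ {f g : A} {x : A} :
    x ∈ cornerSpace k f g Set.univ ↔ ∃ a, x = f * a * g := by
  rw [cornerSpace_eq_map, Submodule.span_univ]
  constructor
  · rintro ⟨a, -, rfl⟩; exact ⟨a, rfl⟩
  · rintro ⟨a, rfl⟩; exact ⟨a, trivial, rfl⟩

lemma cornerSpace_mono (f g : A) {S T : Set A} (hST : S ⊆ T) :
    cornerSpace k f g S ≤ cornerSpace k f g T := by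
  apply Submodule.span_mono
  rintro x ⟨a, ha, rfl⟩
  exact ⟨a, hST ha, rfl⟩

lemma range_mulTensor (M N : Submodule k A) :
    LinearMap.range (mulTensor k M N) = M * N := by
  apply le_antisymm
  · rintro x ⟨t, rfl⟩
    induction t with
    | zero => simpa using Submodule.zero_mem _
    | tmul m n =>
      have hmn : mulTensor k M N (m ⊗ₜ n) = (m : A) * (n : A) := rfl
      rw [hmn]
      exact Submodule.mul_mem_mul m.2 n.2
    | add a b ha hb => rw [map_add]; exact add_mem ha hb
  · refine Submodule.mul_le.2 fun m hm n hn => ?_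
    exact ⟨(⟨m, hm⟩ : M) ⊗ₜ (⟨n, hn⟩ : N), rfl⟩

lemma range_toModule {ι : Type*} [DecidableEq ι] {M : ι → Type*}
    [∀ m, AddCommMonoid (M m)] [∀ m, Module k (M m)]
    {Nmod : Type*} [AddCommGroup Nmod] [Module k Nmod]
    (f : ∀ m, M m →ₗ[k] Nmod) :
    LinearMap.range (DirectSum.toModule k ι Nmod f) = ⨆ m, LinearMap.range (f m) := by
  apply le_antisymm
  · rintro x ⟨t, rfl⟩
    induction t using DirectSum.induction_on with
    | zero => simpa using Submodule.zero_mem _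
    | of m v =>
      rw [← DirectSum.lof_eq_of k, DirectSum.toModule_lof]
      exact Submodule.mem_iSup_of_mem m ⟨v, rfl⟩
    | add a b ha hb => rw [map_add]; exact add_mem ha hb
  · refine iSup_le fun m => ?_
    rintro x ⟨v, rfl⟩
    exact ⟨DirectSum.lof k ι M m v, DirectSum.toModule_lof k m v⟩

lemma toModule_comp_lof {ι : Type*} [DecidableEq ι] {M : ι → Type*}
    [∀ m, AddCommMonoid (M m)] [∀ m, Module k (M m)]
    {Nmod : Type*} [AddCommGroup Nmod] [Module k Nmod]
    (f : ∀ m, M m →ₗ[k] Nmod) (m : ι) :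
    (DirectSum.toModule k ι Nmod f) ∘ₗ DirectSum.lof k ι M m = f m :=
  LinearMap.ext fun v => DirectSum.toModule_lof k m v

lemma disjoint_iSup_range {ι : Type*} [DecidableEq ι] {M : ι → Type*}
    [∀ m, AddCommMonoid (M m)] [∀ m, Module k (M m)]
    {Nmod : Type*} [AddCommGroup Nmod] [Module k Nmod]
    (f : (⨁ m, M m) →ₗ[k] Nmod) (hf : Function.Injective f) (p q : ι → Prop)
    (hpq : ∀ m, p m → q m → False) :
    (⨆ m, ⨆ _ : p m, LinearMap.range (f ∘ₗ DirectSum.lof k ι M m)) ⊓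
      (⨆ m, ⨆ _ : q m, LinearMap.range (f ∘ₗ DirectSum.lof k ι M m)) = ⊥ := by
  have key : ∀ p' : ι → Prop,
      (⨆ m, ⨆ _ : p' m, LinearMap.range (f ∘ₗ DirectSum.lof k ι M m))
        = Submodule.map f (⨆ m, ⨆ _ : p' m, LinearMap.range (DirectSum.lof k ι M m)) := by
    intro p'
    rw [Submodule.map_iSup]
    refine iSup_congr fun m => ?_
    rw [Submodule.map_iSup]
    exact iSup_congr fun _ => LinearMap.range_comp _ _
  rw [key, key, ← Submodule.map_inf _ hf]
  have hW : ∀ p' q' : ι → Prop, (∀ m, p' m → ¬ q' m) →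
      (⨆ m, ⨆ _ : p' m, LinearMap.range (DirectSum.lof k ι M m)) ≤
        ⨅ m, ⨅ _ : q' m, LinearMap.ker (DirectSum.component k ι M m) := by
    intro p' q' hd
    refine iSup_le fun m => iSup_le fun hm => ?_
    rintro x ⟨v, rfl⟩
    refine Submodule.mem_iInf _ |>.2 fun m' => Submodule.mem_iInf _ |>.2 fun hm' => ?_
    have hne : m ≠ m' := fun hEq => hd m hm (hEq ▸ hm')
    show DirectSum.component k ι M m' (DirectSum.lof k ι M m v) = 0
    rw [DirectSum.component.of]
    exact dif_neg hne
  have hbot : (⨆ m, ⨆ _ : p m, LinearMap.range (DirectSum.lof k ι M m)) ⊓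
      (⨆ m, ⨆ _ : q m, LinearMap.range (DirectSum.lof k ι M m)) = ⊥ := by
    refine le_bot_iff.1 fun x hx => ?_
    have hxp := hW p q (fun m hm hm' => hpq m hm hm') hx.1
    have hxq := hW q (fun m => ¬ q m) (fun m hm hm' => hm' hm) hx.2
    have hcomp : ∀ m, DirectSum.component k ι M m x = 0 := by
      intro m
      by_cases hqm : q m
      · exact (Submodule.mem_iInf _).1 ((Submodule.mem_iInf _).1 hxp m) hqm
      · exact (Submodule.mem_iInf _).1 ((Submodule.mem_iInf _).1 hxq m) hqm
    have : x = 0 := DirectSum.ext_component k (fun m => by rw [hcomp m]; simp)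
    simpa using this
  rw [hbot, Submodule.map_bot]

end Corner

section ReedyLemmas

variable {k : Type*} [Field k] {A : Type*} [Ring A] [Algebra k A]
  {ι : Type*} [Fintype ι] [DecidableEq ι] {e : ι → A} {deg : ι → ℕ}
  {Ap Am : Subalgebra k A}

lemma corner_fix_left {f g x : A} {S : Set A} (hf : f * f = f)
    (hx : x ∈ cornerSpace k f g S) : f * x = x := by
  induction hx using Submodule.span_induction with
  | mem y hy =>
    obtain ⟨a, -, rfl⟩ := hy
    rw [← mul_assoc, ← mul_assoc, hf]
  | zero => rw [mul_zero]
  | add a b _ _ ha hb => rw [mul_add, ha, hb]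
  | smul c a _ ha => rw [mul_smul_comm, ha]

lemma corner_fix_right {f g x : A} {S : Set A} (hg : g * g = g)
    (hx : x ∈ cornerSpace k f g S) : x * g = x := by
  induction hx using Submodule.span_induction with
  | mem y hy =>
    obtain ⟨a, -, rfl⟩ := hy
    rw [mul_assoc, hg]
  | zero => rw [zero_mul]
  | add a b _ _ ha hb => rw [add_mul, ha, hb]
  | smul c a _ ha => rw [smul_mul_assoc, ha]

lemma mem_corner_iff {f g x : A} {S : Set A} :
    x ∈ cornerSpace k f g S ↔ ∃ a ∈ Submodule.span k S, x = f * a * g := by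
  rw [cornerSpace_eq_map]
  constructor
  · rintro ⟨a, ha, rfl⟩; exact ⟨a, ha, rfl⟩
  · rintro ⟨a, ha, rfl⟩; exact ⟨a, ha, rfl⟩

lemma corner_mul_corner_univ {f g u : A} (hu : u * u = u)
    {S T : Set A} :
    cornerSpace k f u S * cornerSpace k u g T ≤ cornerSpace k f g Set.univ := by
  refine Submodule.mul_le.2 fun x hx y hy => ?_
  obtain ⟨a, -, rfl⟩ := mem_corner_iff.1 hx
  obtain ⟨b, -, rfl⟩ := mem_corner_iff.1 hy
  refine mem_corner_univ.2 ⟨a * u * b, ?_⟩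
  simp only [mul_assoc]
  rw [← mul_assoc u u, hu]

lemma corner_mul_corner_subalg {B : Subalgebra k A} {f g u : A} (hu : u * u = u)
    (huB : u ∈ B) :
    cornerSpace k f u (B : Set A) * cornerSpace k u g (B : Set A)
      ≤ cornerSpace k f g (B : Set A) := by
  refine Submodule.mul_le.2 fun x hx y hy => ?_
  obtain ⟨a, ha, rfl⟩ := mem_corner_subalgebra.1 hx
  obtain ⟨b, hb, rfl⟩ := mem_corner_subalgebra.1 hy
  refine mem_corner_subalgebra.2 ⟨a * u * b, mul_mem (mul_mem ha huB) hb, ?_⟩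
  simp only [mul_assoc]
  rw [← mul_assoc u u, hu]

lemma PN_le_fix {f g u u' : A} (hf : f * f = f) (hg : g * g = g) {S T : Set A} :
    cornerSpace k f u S * cornerSpace k u' g T
      ≤ LinearMap.ker (mulLR k f g - LinearMap.id) := by
  refine Submodule.mul_le.2 fun x hx y hy => ?_
  have h1 : f * x = x := corner_fix_left hf hx
  have h2 : y * g = y := corner_fix_right hg hy
  simp only [LinearMap.mem_ker, LinearMap.sub_apply, mulLR_apply, LinearMap.id_apply,
    sub_eq_zero]
  rw [mul_assoc, mul_assoc, h2, ← mul_assoc, h1]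

end ReedyLemmas

section Crux

variable {k : Type*} [Field k] {A : Type*} [Ring A] [Algebra k A]
  {ι : Type*} [Fintype ι] [DecidableEq ι] {e : ι → A} {deg : ι → ℕ}
  {Ap Am : Subalgebra k A}

lemma Full_eq (h : IsReedy k e deg Ap Am) (j i : ι) :
    cornerSpace k (e j) (e i) Set.univ
      = ⨆ m, cornerSpace k (e j) (e m) (Ap : Set A)
          * cornerSpace k (e m) (e i) (Am : Set A) := by
  rw [← h.mul_range i j]
  unfold reedyMulMap
  rw [range_toModule]
  exact iSup_congr fun m => range_mulTensor _ _

lemma Full_mul_Full_le (h : IsReedy k e deg Ap Am) {l : ℕ} {m : ι} (hm : deg m ≤ l)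
    (j i : ι) :
    cornerSpace k (e j) (e m) Set.univ * cornerSpace k (e m) (e i) Set.univ
      ≤ ⨆ r, ⨆ _ : deg r ≤ l,
          cornerSpace k (e j) (e r) (Ap : Set A) * cornerSpace k (e r) (e i) (Am : Set A) := by
  rw [Full_eq h j m, Full_eq h m i, Submodule.iSup_mul]
  refine iSup_le fun p => ?_
  rw [Submodule.mul_iSup]
  refine iSup_le fun q => ?_
  by_cases hbp : cornerSpace k (e p) (e m) (Am : Set A) = ⊥
  · rw [hbp, Submodule.mul_bot, Submodule.bot_mul]; exact bot_le
  by_cases hbq : cornerSpace k (e m) (e q) (Ap : Set A) = ⊥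
  · rw [hbq, Submodule.bot_mul, Submodule.mul_bot]; exact bot_le
  have hp : deg p ≤ l := by
    rcases eq_or_ne p m with rfl | hne
    · exact hm
    · exact le_trans (h.offM m p hne.symm hbp).le hm
  have step1 : cornerSpace k (e p) (e m) (Am : Set A) * cornerSpace k (e m) (e q) (Ap : Set A)
      ≤ cornerSpace k (e p) (e q) Set.univ :=
    le_trans (mul_le_mul' (cornerSpace_mono _ _ (Set.subset_univ _))
      (cornerSpace_mono _ _ (Set.subset_univ _))) (corner_mul_corner_univ (h.idem m))
  rw [Full_eq h p q] at step1
  calc (cornerSpace k (e j) (e p) (Ap : Set A) * cornerSpace k (e p) (e m) (Am : Set A)) *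
        (cornerSpace k (e m) (e q) (Ap : Set A) * cornerSpace k (e q) (e i) (Am : Set A))
      = cornerSpace k (e j) (e p) (Ap : Set A) *
          ((cornerSpace k (e p) (e m) (Am : Set A) * cornerSpace k (e m) (e q) (Ap : Set A))
            * cornerSpace k (e q) (e i) (Am : Set A)) := by
        rw [mul_assoc, mul_assoc]
    _ ≤ cornerSpace k (e j) (e p) (Ap : Set A) *
          ((⨆ r, cornerSpace k (e p) (e r) (Ap : Set A)
              * cornerSpace k (e r) (e q) (Am : Set A))
            * cornerSpace k (e q) (e i) (Am : Set A)) :=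
        mul_le_mul' le_rfl (mul_le_mul' step1 le_rfl)
    _ = ⨆ r, cornerSpace k (e j) (e p) (Ap : Set A) *
          ((cornerSpace k (e p) (e r) (Ap : Set A) * cornerSpace k (e r) (e q) (Am : Set A))
            * cornerSpace k (e q) (e i) (Am : Set A)) := by
        rw [Submodule.iSup_mul, Submodule.mul_iSup]
    _ ≤ _ := by
        refine iSup_le fun r => ?_
        by_cases hbr : cornerSpace k (e p) (e r) (Ap : Set A) = ⊥
        · rw [hbr, Submodule.bot_mul, Submodule.bot_mul, Submodule.mul_bot]; exact bot_le
        have hr : deg r ≤ l := by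
          rcases eq_or_ne r p with rfl | hne
          · exact hp
          · exact le_trans (h.offP r p hne hbr).le hp
        refine le_iSup_of_le r (le_iSup_of_le hr ?_)
        calc cornerSpace k (e j) (e p) (Ap : Set A) *
              ((cornerSpace k (e p) (e r) (Ap : Set A) * cornerSpace k (e r) (e q) (Am : Set A))
                * cornerSpace k (e q) (e i) (Am : Set A))
            = (cornerSpace k (e j) (e p) (Ap : Set A) * cornerSpace k (e p) (e r) (Ap : Set A)) *
              (cornerSpace k (e r) (e q) (Am : Set A) * cornerSpace k (e q) (e i) (Am : Set A)) := by
              rw [mul_assoc, mul_assoc]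
          _ ≤ cornerSpace k (e j) (e r) (Ap : Set A) * cornerSpace k (e r) (e i) (Am : Set A) :=
              mul_le_mul'
                (corner_mul_corner_subalg (h.idem p) (h.memP p))
                (corner_mul_corner_subalg (h.idem q) (h.memM q))

lemma corner_Isub_le (h : IsReedy k e deg Ap Am) (l : ℕ) (ε : A)
    (hεdef : ε = ∑ i : {i : ι // deg i ≤ l}, e i.1) (j i : ι) :
    Submodule.map (mulLR k (e j) (e i)) (Isub k ε)
      ≤ ⨆ r, ⨆ _ : deg r ≤ l,
          cornerSpace k (e j) (e r) (Ap : Set A) * cornerSpace k (e r) (e i) (Am : Set A) := by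
  unfold Isub
  rw [Submodule.map_span, Submodule.span_le]
  rintro x ⟨y, ⟨u, v, rfl⟩, rfl⟩
  simp only [SetLike.mem_coe, mulLR_apply]
  have expand : e j * (u * ε * v) * e i
      = ∑ m : {i : ι // deg i ≤ l}, (e j * u * e m.1) * (e m.1 * v * e i) := by
    rw [hεdef, Finset.mul_sum, Finset.sum_mul, Finset.mul_sum, Finset.sum_mul]
    refine Finset.sum_congr rfl fun m _ => ?_
    simp only [mul_assoc]
    rw [← mul_assoc (e m.1) (e m.1), (h.idem m.1)]
  rw [expand]
  refine Submodule.sum_mem _ fun m _ => ?_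
  have hmem : (e j * u * e m.1) * (e m.1 * v * e i)
      ∈ cornerSpace k (e j) (e m.1) Set.univ * cornerSpace k (e m.1) (e i) Set.univ :=
    Submodule.mul_mem_mul (mem_corner_univ.2 ⟨u, rfl⟩) (mem_corner_univ.2 ⟨v, rfl⟩)
  exact Full_mul_Full_le h m.2 j i hmem

lemma P_le_PN (h : IsReedy k e deg Ap Am) (j i : ι) :
    cornerSpace k (e j) (e i) (Ap : Set A)
      ≤ cornerSpace k (e j) (e i) (Ap : Set A) * cornerSpace k (e i) (e i) (Am : Set A) := by
  intro x hx
  have hei : e i ∈ cornerSpace k (e i) (e i) (Am : Set A) :=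
    mem_corner_subalgebra.2 ⟨e i, h.memM i, by rw [(h.idem i), (h.idem i)]⟩
  have := Submodule.mul_mem_mul hx hei
  rwa [corner_fix_right (h.idem i) hx] at this

lemma N_le_PN (h : IsReedy k e deg Ap Am) (j i : ι) :
    cornerSpace k (e j) (e i) (Am : Set A)
      ≤ cornerSpace k (e j) (e j) (Ap : Set A) * cornerSpace k (e j) (e i) (Am : Set A) := by
  intro x hx
  have hej : e j ∈ cornerSpace k (e j) (e j) (Ap : Set A) :=
    mem_corner_subalgebra.2 ⟨e j, h.memP j, by rw [(h.idem j), (h.idem j)]⟩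
  have := Submodule.mul_mem_mul hej hx
  rwa [corner_fix_left (h.idem j) hx] at this

end Crux

end ReedyQ

set_option maxHeartbeats 3200000 in
set_option synthInstance.maxHeartbeats 400000 in
open ReedyQ in
/-- If `(A, A⁺, A⁻)` is Reedy and `e = ε₀ + ⋯ + εₗ`, then
`(A/AeA, A⁺/A⁺eA⁺, A⁻/A⁻eA⁻)` is Reedy: the canonical algebra maps
`A⁺/A⁺eA⁺ → A/AeA` and `A⁻/A⁻eA⁻ → A/AeA` are injective, and `A/AeA` is Reedy with
respect to their images, the residual idempotents and the inherited degree function. -/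
theorem reedy_quotient_is_reedy
    (k : Type*) [Field k] (A : Type*) [Ring A] [Algebra k A] [FiniteDimensional k A]
    {ι : Type*} [Fintype ι] [DecidableEq ι]
    (e : ι → A) (deg : ι → ℕ) (Ap Am : Subalgebra k A)
    (h : IsReedy k e deg Ap Am) (l : ℕ)
    (ε : A) (hεdef : ε = ∑ i : {i : ι // deg i ≤ l}, e i.1)
    (hP : ε ∈ Ap) (hM : ε ∈ Am) :
    ∃ (φ : RingQuot (idealRel (⟨ε, hP⟩ : Ap)) →ₐ[k] RingQuot (idealRel ε))
      (ψ : RingQuot (idealRel (⟨ε, hM⟩ : Am)) →ₐ[k] RingQuot (idealRel ε)),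
      (∀ a : Ap, φ (RingQuot.mkAlgHom k (idealRel (⟨ε, hP⟩ : Ap)) a)
          = RingQuot.mkAlgHom k (idealRel ε) (a : A)) ∧
      (∀ a : Am, ψ (RingQuot.mkAlgHom k (idealRel (⟨ε, hM⟩ : Am)) a)
          = RingQuot.mkAlgHom k (idealRel ε) (a : A)) ∧
      Function.Injective φ ∧ Function.Injective ψ ∧
      IsReedy k (fun i : {i : ι // l < deg i} =>
          RingQuot.mkAlgHom k (idealRel ε) (e i.1))
        (fun i => deg i.1) φ.range ψ.range := by
  classical
  set π : A →ₐ[k] RingQuot (idealRel ε) := RingQuot.mkAlgHom k (idealRel ε) with hπdef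
  have hεI : ε ∈ Isub k ε := eps_mem_Isub ε
  have hπ0 : ∀ a : A, π a = 0 ↔ a ∈ Isub k ε := mkAlgHom_eq_zero_iff ε
  have hεe : ∀ i : ι, deg i ≤ l → ε * e i = e i := by
    intro i hi
    rw [hεdef, Finset.sum_mul]
    rw [Finset.sum_eq_single (⟨i, hi⟩ : {i : ι // deg i ≤ l})]
    · exact h.idem i
    · intro b _ hb
      exact h.orth b.1 i (fun hEq => hb (Subtype.ext hEq))
    · intro habs; exact absurd (Finset.mem_univ _) habs
  have heε : ∀ i : ι, deg i ≤ l → e i * ε = e i := by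
    intro i hi
    rw [hεdef, Finset.mul_sum]
    rw [Finset.sum_eq_single (⟨i, hi⟩ : {i : ι // deg i ≤ l})]
    · exact h.idem i
    · intro b _ hb
      exact h.orth i b.1 (fun hEq => hb (Subtype.ext hEq.symm))
    · intro habs; exact absurd (Finset.mem_univ _) habs
  have heI : ∀ i : ι, deg i ≤ l → e i ∈ Isub k ε := by
    intro i hi
    have := mul_mem_Isub ε (e i) (e i) hεI
    rwa [mul_assoc, hεe i hi, h.idem i] at this
  have hπe0 : ∀ i : ι, deg i ≤ l → π (e i) = 0 := fun i hi => (hπ0 _).2 (heI i hi)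
  -- construction of φ and ψ
  have hrelP : ∀ ⦃x y : Ap⦄, idealRel (⟨ε, hP⟩ : Ap) x y
      → (π.comp Ap.val) x = (π.comp Ap.val) y := by
    rintro x y ⟨rfl, u, v, rfl⟩
    simp only [AlgHom.comp_apply, map_zero]
    have hval : (Ap.val) (u * ⟨ε, hP⟩ * v) = (u : A) * ε * (v : A) := rfl
    rw [hval]
    exact (hπ0 _).2 (mul_mem_Isub ε (u : A) (v : A) hεI)
  have hrelM : ∀ ⦃x y : Am⦄, idealRel (⟨ε, hM⟩ : Am) x y
      → (π.comp Am.val) x = (π.comp Am.val) y := by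
    rintro x y ⟨rfl, u, v, rfl⟩
    simp only [AlgHom.comp_apply, map_zero]
    have hval : (Am.val) (u * ⟨ε, hM⟩ * v) = (u : A) * ε * (v : A) := rfl
    rw [hval]
    exact (hπ0 _).2 (mul_mem_Isub ε (u : A) (v : A) hεI)
  set φ : RingQuot (idealRel (⟨ε, hP⟩ : Ap)) →ₐ[k] RingQuot (idealRel ε) :=
    RingQuot.liftAlgHom k ⟨π.comp Ap.val, hrelP⟩ with hφdef
  set ψ : RingQuot (idealRel (⟨ε, hM⟩ : Am)) →ₐ[k] RingQuot (idealRel ε) :=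
    RingQuot.liftAlgHom k ⟨π.comp Am.val, hrelM⟩ with hψdef
  have hφ : ∀ a : Ap, φ (RingQuot.mkAlgHom k (idealRel (⟨ε, hP⟩ : Ap)) a) = π (a : A) :=
    fun a => RingQuot.liftAlgHom_mkAlgHom_apply k _ _ a
  have hψ : ∀ a : Am, ψ (RingQuot.mkAlgHom k (idealRel (⟨ε, hM⟩ : Am)) a) = π (a : A) :=
    fun a => RingQuot.liftAlgHom_mkAlgHom_apply k _ _ a
  -- disjointness of partial sums of the corner decomposition
  have hdisj : ∀ (j i : ι) (p q : ι → Prop), (∀ m, p m → q m → False) →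
      (⨆ m, ⨆ _ : p m, cornerSpace k (e j) (e m) (Ap : Set A)
          * cornerSpace k (e m) (e i) (Am : Set A)) ⊓
        (⨆ m, ⨆ _ : q m, cornerSpace k (e j) (e m) (Ap : Set A)
          * cornerSpace k (e m) (e i) (Am : Set A)) = ⊥ := by
    intro j i p q hpq
    have hr : ∀ m : ι, LinearMap.range
        ((reedyMulMap k e (Ap : Set A) (Am : Set A) j i) ∘ₗ
          DirectSum.lof k ι (fun m => ↥(cornerSpace k (e j) (e m) (Ap : Set A))
            ⊗[k] ↥(cornerSpace k (e m) (e i) (Am : Set A))) m)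
        = cornerSpace k (e j) (e m) (Ap : Set A) * cornerSpace k (e m) (e i) (Am : Set A) := by
      intro m
      rw [show (reedyMulMap k e (Ap : Set A) (Am : Set A) j i) ∘ₗ
          DirectSum.lof k ι _ m = mulTensor k (cornerSpace k (e j) (e m) (Ap : Set A))
            (cornerSpace k (e m) (e i) (Am : Set A)) from toModule_comp_lof _ m]
      exact range_mulTensor _ _
    have := disjoint_iSup_range (reedyMulMap k e (Ap : Set A) (Am : Set A) j i)
      (h.mul_inj i j) p q hpq
    simp only [hr] at this
    exact this
  -- vanishing of high-degree corner elements of the ideal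
  have hPzero : ∀ (j i : ι), l < deg i → ∀ x : A,
      x ∈ cornerSpace k (e j) (e i) (Ap : Set A) → x ∈ Isub k ε → x = 0 := by
    intro j i hi x hxP hxI
    have hfix : e j * x * e i = x := by
      rw [corner_fix_left (h.idem j) hxP, corner_fix_right (h.idem i) hxP]
    have hx1 : x ∈ ⨆ m, ⨆ _ : m = i, cornerSpace k (e j) (e m) (Ap : Set A)
        * cornerSpace k (e m) (e i) (Am : Set A) :=
by
      have hle : cornerSpace k (e j) (e i) (Ap : Set A) * cornerSpace k (e i) (e i) (Am : Set A)
          ≤ ⨆ m, ⨆ _ : m = i, cornerSpace k (e j) (e m) (Ap : Set A)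
            * cornerSpace k (e m) (e i) (Am : Set A) :=
        le_iSup_of_le i (le_iSup_of_le rfl le_rfl)
      exact hle (P_le_PN h j i hxP)
    have hx2 : x ∈ ⨆ m, ⨆ _ : deg m ≤ l, cornerSpace k (e j) (e m) (Ap : Set A)
        * cornerSpace k (e m) (e i) (Am : Set A) :=
      corner_Isub_le h l ε hεdef j i ⟨x, hxI, hfix⟩
    have hb := hdisj j i (fun m => m = i) (fun m => deg m ≤ l)
      (fun m hm hm' => absurd hm' (by rw [hm]; exact not_le.2 hi))
    have : x ∈ (⊥ : Submodule k A) := hb ▸ Submodule.mem_inf.2 ⟨hx1, hx2⟩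
    simpa using this
  have hNzero : ∀ (j i : ι), l < deg j → ∀ x : A,
      x ∈ cornerSpace k (e j) (e i) (Am : Set A) → x ∈ Isub k ε → x = 0 := by
    intro j i hj x hxN hxI
    have hfix : e j * x * e i = x := by
      rw [corner_fix_left (h.idem j) hxN, corner_fix_right (h.idem i) hxN]
    have hx1 : x ∈ ⨆ m, ⨆ _ : m = j, cornerSpace k (e j) (e m) (Ap : Set A)
        * cornerSpace k (e m) (e i) (Am : Set A) :=
by
      have hle : cornerSpace k (e j) (e j) (Ap : Set A) * cornerSpace k (e j) (e i) (Am : Set A)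
          ≤ ⨆ m, ⨆ _ : m = j, cornerSpace k (e j) (e m) (Ap : Set A)
            * cornerSpace k (e m) (e i) (Am : Set A) :=
        le_iSup_of_le j (le_iSup_of_le rfl le_rfl)
      exact hle (N_le_PN h j i hxN)
    have hx2 : x ∈ ⨆ m, ⨆ _ : deg m ≤ l, cornerSpace k (e j) (e m) (Ap : Set A)
        * cornerSpace k (e m) (e i) (Am : Set A) :=
      corner_Isub_le h l ε hεdef j i ⟨x, hxI, hfix⟩
    have hb := hdisj j i (fun m => m = j) (fun m => deg m ≤ l)
      (fun m hm hm' => absurd hm' (by rw [hm]; exact not_le.2 hj))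
    have : x ∈ (⊥ : Submodule k A) := hb ▸ Submodule.mem_inf.2 ⟨hx1, hx2⟩
    simpa using this
  -- Peirce decomposition
  have hPeirce : ∀ a : A, ∑ j : ι, ∑ i : ι, e j * a * e i = a := by
    intro a
    have hrow : ∀ j : ι, ∑ i : ι, e j * a * e i = e j * a := fun j => by
      rw [← Finset.mul_sum, h.complete, mul_one]
    simp only [hrow]
    rw [← Finset.sum_mul, h.complete, one_mul]
  -- injectivity of φ
  have hφinj : Function.Injective φ := by
    refine (injective_iff_map_eq_zero φ).2 fun q hq => ?_
    obtain ⟨a, rfl⟩ := RingQuot.mkAlgHom_surjective k _ q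
    have hπa : π (a : A) = 0 := by rw [← hφ a]; exact hq
    have haI : (a : A) ∈ Isub k ε := (hπ0 _).1 hπa
    rw [mkAlgHom_eq_zero_iff (⟨ε, hP⟩ : Ap) a]
    have hmap : (a : A) ∈ Submodule.map (Ap.val.toLinearMap)
        (Isub k (⟨ε, hP⟩ : Ap)) := by
      rw [← hPeirce (a : A)]
      refine Submodule.sum_mem _ fun j _ => Submodule.sum_mem _ fun i _ => ?_
      by_cases hi : deg i ≤ l
      · refine ⟨(⟨e j, h.memP j⟩ * a) * ⟨ε, hP⟩ * ⟨e i, h.memP i⟩,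
          Submodule.subset_span ⟨_, _, rfl⟩, ?_⟩
        show ((e j * (a : A)) * ε) * e i = e j * (a : A) * e i
        rw [mul_assoc (e j * (a : A)) ε (e i), hεe i hi]
      · have hz : e j * (a : A) * e i = 0 :=
          hPzero j i (not_le.1 hi) _
            (mem_corner_subalgebra.2 ⟨(a : A), a.2, rfl⟩)
            (mul_mem_Isub ε (e j) (e i) haI)
        rw [hz]; exact Submodule.zero_mem _
    obtain ⟨b, hb, hba⟩ := hmap
    have hbeq : b = a := Subtype.ext hba
    rwa [← hbeq]
  -- injectivity of ψ
  have hψinj : Function.Injective ψ := by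
    refine (injective_iff_map_eq_zero ψ).2 fun q hq => ?_
    obtain ⟨a, rfl⟩ := RingQuot.mkAlgHom_surjective k _ q
    have hπa : π (a : A) = 0 := by rw [← hψ a]; exact hq
    have haI : (a : A) ∈ Isub k ε := (hπ0 _).1 hπa
    rw [mkAlgHom_eq_zero_iff (⟨ε, hM⟩ : Am) a]
    have hmap : (a : A) ∈ Submodule.map (Am.val.toLinearMap)
        (Isub k (⟨ε, hM⟩ : Am)) := by
      rw [← hPeirce (a : A)]
      refine Submodule.sum_mem _ fun j _ => Submodule.sum_mem _ fun i _ => ?_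
      by_cases hj : deg j ≤ l
      · refine ⟨⟨e j, h.memM j⟩ * ⟨ε, hM⟩ * (a * ⟨e i, h.memM i⟩),
          Submodule.subset_span ⟨_, _, rfl⟩, ?_⟩
        show (e j * ε) * ((a : A) * e i) = e j * (a : A) * e i
        rw [heε j hj, ← mul_assoc]
      · have hz : e j * (a : A) * e i = 0 :=
          hNzero j i (not_le.1 hj) _
            (mem_corner_subalgebra.2 ⟨(a : A), a.2, rfl⟩)
            (mul_mem_Isub ε (e j) (e i) haI)
        rw [hz]; exact Submodule.zero_mem _
    obtain ⟨b, hb, hba⟩ := hmap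
    have hbeq : b = a := Subtype.ext hba
    rwa [← hbeq]
  -- quotient corner descriptions
  have hπlin : ∀ (f g : A), (mulLR k (π f) (π g)) ∘ₗ π.toLinearMap
      = π.toLinearMap ∘ₗ (mulLR k f g) := by
    intro f g
    ext x
    simp only [LinearMap.comp_apply, mulLR_apply, AlgHom.toLinearMap_apply, map_mul]
  have hφrangeSub : Subalgebra.toSubmodule φ.range
      = Submodule.map π.toLinearMap (Subalgebra.toSubmodule Ap) := by
    ext q
    simp only [Subalgebra.mem_toSubmodule, AlgHom.mem_range, Submodule.mem_map]
    constructor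
    · rintro ⟨p, rfl⟩
      obtain ⟨a, rfl⟩ := RingQuot.mkAlgHom_surjective k _ p
      exact ⟨(a : A), a.2, (hφ a).symm⟩
    · rintro ⟨a, ha, rfl⟩
      exact ⟨RingQuot.mkAlgHom k (idealRel (⟨ε, hP⟩ : Ap)) ⟨a, ha⟩, hφ ⟨a, ha⟩⟩
  have hψrangeSub : Subalgebra.toSubmodule ψ.range
      = Submodule.map π.toLinearMap (Subalgebra.toSubmodule Am) := by
    ext q
    simp only [Subalgebra.mem_toSubmodule, AlgHom.mem_range, Submodule.mem_map]
    constructor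
    · rintro ⟨p, rfl⟩
      obtain ⟨a, rfl⟩ := RingQuot.mkAlgHom_surjective k _ p
      exact ⟨(a : A), a.2, (hψ a).symm⟩
    · rintro ⟨a, ha, rfl⟩
      exact ⟨RingQuot.mkAlgHom k (idealRel (⟨ε, hM⟩ : Am)) ⟨a, ha⟩, hψ ⟨a, ha⟩⟩
  have hPcorner : ∀ (j i : ι), cornerSpace k (π (e j)) (π (e i)) (φ.range : Set _)
      = Submodule.map π.toLinearMap (cornerSpace k (e j) (e i) (Ap : Set A)) := by
    intro j i
    rw [cornerSpace_eq_map, span_coe_subalgebra, hφrangeSub, cornerSpace_eq_map,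
      span_coe_subalgebra, ← Submodule.map_comp, ← Submodule.map_comp, hπlin]
  have hNcorner : ∀ (j i : ι), cornerSpace k (π (e j)) (π (e i)) (ψ.range : Set _)
      = Submodule.map π.toLinearMap (cornerSpace k (e j) (e i) (Am : Set A)) := by
    intro j i
    rw [cornerSpace_eq_map, span_coe_subalgebra, hψrangeSub, cornerSpace_eq_map,
      span_coe_subalgebra, ← Submodule.map_comp, ← Submodule.map_comp, hπlin]
  have hUcorner : ∀ (j i : ι),
      cornerSpace k (π (e j)) (π (e i)) (Set.univ : Set (RingQuot (idealRel ε)))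
        = Submodule.map π.toLinearMap (cornerSpace k (e j) (e i) Set.univ) := by
    intro j i
    have htop : (⊤ : Submodule k (RingQuot (idealRel ε))) = Submodule.map π.toLinearMap ⊤ := by
      rw [Submodule.map_top]
      exact (LinearMap.range_eq_top.2 fun q => RingQuot.mkAlgHom_surjective k _ q).symm
    rw [cornerSpace_eq_map, Submodule.span_univ, cornerSpace_eq_map, Submodule.span_univ,
      htop, ← Submodule.map_comp, ← Submodule.map_comp, hπlin]
  -- kernels of the projection restricted to high corners
  have hkerP : ∀ (j i : ι), l < deg i → Function.Injective
      (π.toLinearMap ∘ₗ (cornerSpace k (e j) (e i) (Ap : Set A)).subtype) := by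
    intro j i hi
    rw [← LinearMap.ker_eq_bot, LinearMap.ker_eq_bot']
    intro x hx
    have hx' : π (x : A) = 0 := hx
    exact Subtype.ext (hPzero j i hi _ x.2 ((hπ0 _).1 hx'))
  have hkerN : ∀ (j i : ι), l < deg j → Function.Injective
      (π.toLinearMap ∘ₗ (cornerSpace k (e j) (e i) (Am : Set A)).subtype) := by
    intro j i hj
    rw [← LinearMap.ker_eq_bot, LinearMap.ker_eq_bot']
    intro x hx
    have hx' : π (x : A) = 0 := hx
    exact Subtype.ext (hNzero j i hj _ x.2 ((hπ0 _).1 hx'))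
  have hrangeP : ∀ (j i : ι), LinearMap.range
      (π.toLinearMap ∘ₗ (cornerSpace k (e j) (e i) (Ap : Set A)).subtype)
        = Submodule.map π.toLinearMap (cornerSpace k (e j) (e i) (Ap : Set A)) := by
    intro j i
    rw [LinearMap.range_comp, Submodule.range_subtype]
  have hrangeN : ∀ (j i : ι), LinearMap.range
      (π.toLinearMap ∘ₗ (cornerSpace k (e j) (e i) (Am : Set A)).subtype)
        = Submodule.map π.toLinearMap (cornerSpace k (e j) (e i) (Am : Set A)) := by
    intro j i
    rw [LinearMap.range_comp, Submodule.range_subtype]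
  -- low corners multiply into the ideal
  have hPNIsub : ∀ m : ι, deg m ≤ l → ∀ (f g : A) (S T : Set A),
      cornerSpace k f (e m) S * cornerSpace k (e m) g T ≤ Isub k ε := by
    intro m hm f g S T
    refine Submodule.mul_le.2 fun x hx y hy => ?_
    have hxfix : x * ε = x := by
      obtain ⟨a, -, rfl⟩ := mem_corner_iff.1 hx
      rw [mul_assoc, heε m hm]
    have hkey : x * y = x * ε * y := by rw [hxfix]
    rw [hkey]
    exact Submodule.subset_span ⟨x, y, rfl⟩
  refine ⟨φ, ψ, hφ, hψ, hφinj, hψinj, ?_⟩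
  -- the main bijectivity transfer for the multiplication maps
  have hbig : ∀ (i j : {i : ι // l < deg i}),
      Function.Injective (reedyMulMap k (fun i : {i : ι // l < deg i} => π (e i.1))
        (φ.range : Set (RingQuot (idealRel ε))) (ψ.range : Set (RingQuot (idealRel ε))) j i) ∧
      LinearMap.range (reedyMulMap k (fun i : {i : ι // l < deg i} => π (e i.1))
        (φ.range : Set (RingQuot (idealRel ε))) (ψ.range : Set (RingQuot (idealRel ε))) j i)
        = cornerSpace k (π (e j.1)) (π (e i.1)) Set.univ := by
    intro i j
    set G := reedyMulMap k e (Ap : Set A) (Am : Set A) j.1 i.1 with hGdef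
    set emb : (⨁ m : {i : ι // l < deg i},
        (↥(cornerSpace k (e j.1) (e m.1) (Ap : Set A))
          ⊗[k] ↥(cornerSpace k (e m.1) (e i.1) (Am : Set A)))) →ₗ[k]
        (⨁ m : ι, (↥(cornerSpace k (e j.1) (e m) (Ap : Set A))
          ⊗[k] ↥(cornerSpace k (e m) (e i.1) (Am : Set A)))) :=
      DirectSum.toModule k _ _ (fun m => DirectSum.lof k ι
        (fun m => ↥(cornerSpace k (e j.1) (e m) (Ap : Set A))
          ⊗[k] ↥(cornerSpace k (e m) (e i.1) (Am : Set A))) m.1) with hembdef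
    set retr : (⨁ m : ι, (↥(cornerSpace k (e j.1) (e m) (Ap : Set A))
          ⊗[k] ↥(cornerSpace k (e m) (e i.1) (Am : Set A)))) →ₗ[k]
        (⨁ m : {i : ι // l < deg i},
        (↥(cornerSpace k (e j.1) (e m.1) (Ap : Set A))
          ⊗[k] ↥(cornerSpace k (e m.1) (e i.1) (Am : Set A)))) :=
      DirectSum.toModule k _ _ (fun n => if hn : l < deg n then
        (DirectSum.lof k {i : ι // l < deg i}
          (fun m => ↥(cornerSpace k (e j.1) (e m.1) (Ap : Set A))
            ⊗[k] ↥(cornerSpace k (e m.1) (e i.1) (Am : Set A))) ⟨n, hn⟩) else 0) with hretrdef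
    have hre : ∀ t, retr (emb t) = t := by
      intro t
      induction t using DirectSum.induction_on with
      | zero => simp
      | of m v =>
        rw [← DirectSum.lof_eq_of k, hembdef, DirectSum.toModule_lof, hretrdef,
          DirectSum.toModule_lof, dif_pos m.2]
      | add a b ha hb => rw [map_add, map_add, ha, hb]
    have hembinj : Function.Injective emb := Function.LeftInverse.injective hre
    set F := G ∘ₗ emb with hFdef
    have hFinj : Function.Injective F := by
      rw [hFdef, LinearMap.coe_comp]
      exact Function.Injective.comp (h.mul_inj i.1 j.1) hembinj
    have hleVgt : ∀ m : ι, l < deg m →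
        (cornerSpace k (e j.1) (e m) (Ap : Set A)
          * cornerSpace k (e m) (e i.1) (Am : Set A)) ≤
        ⨆ m, ⨆ _ : l < deg m, cornerSpace k (e j.1) (e m) (Ap : Set A)
          * cornerSpace k (e m) (e i.1) (Am : Set A) := by
      intro m hm
      exact le_iSup_of_le m (le_iSup_of_le hm le_rfl)
    have hFlof : ∀ (m : {i : ι // l < deg i})
        (v : ↥(cornerSpace k (e j.1) (e m.1) (Ap : Set A))
          ⊗[k] ↥(cornerSpace k (e m.1) (e i.1) (Am : Set A))),
        F (DirectSum.lof k {i : ι // l < deg i}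
        (fun m : {i : ι // l < deg i} => ↥(cornerSpace k (e j.1) (e m.1) (Ap : Set A))
          ⊗[k] ↥(cornerSpace k (e m.1) (e i.1) (Am : Set A))) m v)
        = mulTensor k (cornerSpace k (e j.1) (e m.1) (Ap : Set A))
            (cornerSpace k (e m.1) (e i.1) (Am : Set A)) v := by
      intro m v
      rw [hFdef, LinearMap.comp_apply, hembdef, DirectSum.toModule_lof, hGdef]
      unfold reedyMulMap
      rw [DirectSum.toModule_lof]
    have hFmem : ∀ t, F t ∈ ⨆ m, ⨆ _ : l < deg m,
        cornerSpace k (e j.1) (e m) (Ap : Set A)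
          * cornerSpace k (e m) (e i.1) (Am : Set A) := by
      intro t
      induction t using DirectSum.induction_on with
      | zero => simp
      | of m v =>
        rw [← DirectSum.lof_eq_of k, hFlof m v]
        refine hleVgt m.1 m.2 ?_
        rw [← range_mulTensor]
        exact ⟨v, rfl⟩
      | add a b ha hb => rw [map_add]; exact add_mem ha hb
    have hVgt_le_rangeF : (⨆ m, ⨆ _ : l < deg m,
        cornerSpace k (e j.1) (e m) (Ap : Set A)
          * cornerSpace k (e m) (e i.1) (Am : Set A)) ≤ LinearMap.range F := by
      refine iSup_le fun m => iSup_le fun hm => ?_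
      rintro x hx
      rw [← range_mulTensor] at hx
      obtain ⟨t, rfl⟩ := hx
      exact ⟨DirectSum.lof k _ _ (⟨m, hm⟩ : {i : ι // l < deg i}) t, hFlof ⟨m, hm⟩ t⟩
    have hrangeF : LinearMap.range F = ⨆ m, ⨆ _ : l < deg m,
        cornerSpace k (e j.1) (e m) (Ap : Set A)
          * cornerSpace k (e m) (e i.1) (Am : Set A) :=
      le_antisymm (by rintro x ⟨t, rfl⟩; exact hFmem t) hVgt_le_rangeF
    have hπFinj : ∀ t, π (F t) = 0 → t = 0 := by
      intro t ht
      have h1 : F t ∈ Isub k ε := (hπ0 _).1 ht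
      have hker : (⨆ m, ⨆ _ : l < deg m,
          cornerSpace k (e j.1) (e m) (Ap : Set A)
            * cornerSpace k (e m) (e i.1) (Am : Set A)) ≤
          LinearMap.ker (mulLR k (e j.1) (e i.1) - LinearMap.id) :=
        iSup_le fun m => iSup_le fun hm => PN_le_fix (h.idem j.1) (h.idem i.1)
      have h5 := hker (hFmem t)
      rw [LinearMap.mem_ker, LinearMap.sub_apply, mulLR_apply, LinearMap.id_apply,
        sub_eq_zero] at h5
      have h2 : F t ∈ ⨆ m, ⨆ _ : deg m ≤ l,
          cornerSpace k (e j.1) (e m) (Ap : Set A)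
            * cornerSpace k (e m) (e i.1) (Am : Set A) :=
        corner_Isub_le h l ε hεdef j.1 i.1 ⟨F t, h1, h5⟩
      have h3 := hdisj j.1 i.1 (fun m => l < deg m) (fun m => deg m ≤ l)
        (fun m hm hm' => absurd hm' (not_le.2 hm))
      have h4 : F t ∈ (⊥ : Submodule k A) := h3 ▸ Submodule.mem_inf.2 ⟨hFmem t, h2⟩
      have h6 : F t = 0 := by simpa using h4
      exact hFinj (h6.trans (map_zero F).symm)
    -- the component equivalences
    set σP : ∀ m : {i : ι // l < deg i},
        (cornerSpace k (e j.1) (e m.1) (Ap : Set A)) ≃ₗ[k]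
        (cornerSpace k (π (e j.1)) (π (e m.1)) (φ.range : Set (RingQuot (idealRel ε)))) :=
      fun m => (LinearEquiv.ofInjective _ (hkerP j.1 m.1 m.2)).trans
        (LinearEquiv.ofEq _ _ (by rw [hrangeP, hPcorner])) with hσPdef
    set σN : ∀ m : {i : ι // l < deg i},
        (cornerSpace k (e m.1) (e i.1) (Am : Set A)) ≃ₗ[k]
        (cornerSpace k (π (e m.1)) (π (e i.1)) (ψ.range : Set (RingQuot (idealRel ε)))) :=
      fun m => (LinearEquiv.ofInjective _ (hkerN m.1 i.1 m.2)).trans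
        (LinearEquiv.ofEq _ _ (by rw [hrangeN, hNcorner])) with hσNdef
    have hσPcoe : ∀ m x, ((σP m) x : RingQuot (idealRel ε)) = π (x : A) := by
      intro m x
      rw [hσPdef]
      simp only [LinearEquiv.trans_apply, LinearEquiv.coe_ofEq_apply,
        LinearEquiv.ofInjective_apply, LinearMap.comp_apply]
      rfl
    have hσNcoe : ∀ m x, ((σN m) x : RingQuot (idealRel ε)) = π (x : A) := by
      intro m x
      rw [hσNdef]
      simp only [LinearEquiv.trans_apply, LinearEquiv.coe_ofEq_apply,
        LinearEquiv.ofInjective_apply, LinearMap.comp_apply]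
      rfl
    set τ : ∀ m : {i : ι // l < deg i},
        (↥(cornerSpace k (e j.1) (e m.1) (Ap : Set A))
          ⊗[k] ↥(cornerSpace k (e m.1) (e i.1) (Am : Set A))) ≃ₗ[k]
        (↥(cornerSpace k (π (e j.1)) (π (e m.1)) (φ.range : Set (RingQuot (idealRel ε))))
          ⊗[k] ↥(cornerSpace k (π (e m.1)) (π (e i.1))
            (ψ.range : Set (RingQuot (idealRel ε))))) :=
      fun m => TensorProduct.congr (σP m) (σN m) with hτdef
    set Θ : (⨁ m : {i : ι // l < deg i},
        (↥(cornerSpace k (e j.1) (e m.1) (Ap : Set A))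
          ⊗[k] ↥(cornerSpace k (e m.1) (e i.1) (Am : Set A)))) →ₗ[k]
        (⨁ m : {i : ι // l < deg i},
        (↥(cornerSpace k (π (e j.1)) (π (e m.1)) (φ.range : Set (RingQuot (idealRel ε))))
          ⊗[k] ↥(cornerSpace k (π (e m.1)) (π (e i.1))
            (ψ.range : Set (RingQuot (idealRel ε)))))) :=
      DirectSum.toModule k _ _ (fun m => (DirectSum.lof k {i : ι // l < deg i}
        (fun m => ↥(cornerSpace k (π (e j.1)) (π (e m.1)) (φ.range : Set (RingQuot (idealRel ε))))
          ⊗[k] ↥(cornerSpace k (π (e m.1)) (π (e i.1))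
            (ψ.range : Set (RingQuot (idealRel ε))))) m) ∘ₗ (τ m).toLinearMap) with hΘdef
    set Θinv : (⨁ m : {i : ι // l < deg i},
        (↥(cornerSpace k (π (e j.1)) (π (e m.1)) (φ.range : Set (RingQuot (idealRel ε))))
          ⊗[k] ↥(cornerSpace k (π (e m.1)) (π (e i.1))
            (ψ.range : Set (RingQuot (idealRel ε)))))) →ₗ[k]
        (⨁ m : {i : ι // l < deg i},
        (↥(cornerSpace k (e j.1) (e m.1) (Ap : Set A))
          ⊗[k] ↥(cornerSpace k (e m.1) (e i.1) (Am : Set A)))) :=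
      DirectSum.toModule k _ _ (fun m => (DirectSum.lof k {i : ι // l < deg i}
        (fun m => ↥(cornerSpace k (e j.1) (e m.1) (Ap : Set A))
          ⊗[k] ↥(cornerSpace k (e m.1) (e i.1) (Am : Set A))) m)
        ∘ₗ ((τ m).symm.toLinearMap)) with hΘinvdef
    have hΘ2 : ∀ s, Θ (Θinv s) = s := by
      intro s
      induction s using DirectSum.induction_on with
      | zero => simp
      | of m v =>
        rw [← DirectSum.lof_eq_of k, hΘinvdef, DirectSum.toModule_lof, LinearMap.comp_apply,
          hΘdef, DirectSum.toModule_lof, LinearMap.comp_apply, LinearEquiv.coe_coe,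
          LinearEquiv.coe_coe, LinearEquiv.apply_symm_apply]
      | add a b ha hb => rw [map_add, map_add, ha, hb]
    have hsquare : ∀ t, reedyMulMap k (fun i : {i : ι // l < deg i} => π (e i.1))
        (φ.range : Set (RingQuot (idealRel ε))) (ψ.range : Set (RingQuot (idealRel ε))) j i
          (Θ t) = π (F t) := by
      intro t
      induction t using DirectSum.induction_on with
      | zero => simp
      | add a b ha hb => simp only [map_add, ha, hb]
      | of m v =>
        rw [← DirectSum.lof_eq_of k, hΘdef, DirectSum.toModule_lof, LinearMap.comp_apply,
          hFlof m v]
        have hL : ∀ w, reedyMulMap k (fun i : {i : ι // l < deg i} => π (e i.1))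
            (φ.range : Set (RingQuot (idealRel ε))) (ψ.range : Set (RingQuot (idealRel ε))) j i
            (DirectSum.lof k {i : ι // l < deg i} (fun m : {i : ι // l < deg i} =>
              ↥(cornerSpace k (π (e j.1)) (π (e m.1)) (φ.range : Set (RingQuot (idealRel ε))))
              ⊗[k] ↥(cornerSpace k (π (e m.1)) (π (e i.1))
                (ψ.range : Set (RingQuot (idealRel ε))))) m w)
            = mulTensor k (cornerSpace k (π (e j.1)) (π (e m.1))
                (φ.range : Set (RingQuot (idealRel ε))))
              (cornerSpace k (π (e m.1)) (π (e i.1))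
                (ψ.range : Set (RingQuot (idealRel ε)))) w := by
          intro w
          unfold reedyMulMap
          rw [DirectSum.toModule_lof]
        rw [hL]
        induction v using TensorProduct.induction_on with
        | zero => simp
        | add x y hx hy => simp only [map_add, hx, hy]
        | tmul x y =>
          rw [LinearEquiv.coe_coe, hτdef, TensorProduct.congr_tmul]
          show ((σP m) x : RingQuot (idealRel ε)) * ((σN m) y : RingQuot (idealRel ε))
            = π ((x : A) * (y : A))
          rw [hσPcoe, hσNcoe, map_mul]
    constructor
    · -- injectivity downstairs
      intro s t hst
      rw [← hΘ2 s, ← hΘ2 t, hsquare, hsquare] at hst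
      letI : AddCommGroup (⨁ m : {i : ι // l < deg i},
          (↥(cornerSpace k (e j.1) (e m.1) (Ap : Set A))
            ⊗[k] ↥(cornerSpace k (e m.1) (e i.1) (Am : Set A)))) :=
        @DirectSum.instAddCommGroup _ _ (fun m => TensorProduct.addCommGroup)
      have hdiff : π (F (Θinv s - Θinv t)) = 0 := by
        rw [map_sub, map_sub, hst, sub_self]
      have h7 : Θinv s = Θinv t := sub_eq_zero.1 (hπFinj _ hdiff)
      rw [← hΘ2 s, ← hΘ2 t, h7]
    · -- range downstairs
      apply le_antisymm
      · rintro q ⟨s, rfl⟩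
        rw [← hΘ2 s, hsquare, hUcorner j.1 i.1]
        refine ⟨F (Θinv s), ?_, rfl⟩
        rw [Full_eq h j.1 i.1]
        have hVgtleFull : (⨆ m, ⨆ _ : l < deg m,
            cornerSpace k (e j.1) (e m) (Ap : Set A)
              * cornerSpace k (e m) (e i.1) (Am : Set A)) ≤
            ⨆ m, cornerSpace k (e j.1) (e m) (Ap : Set A)
              * cornerSpace k (e m) (e i.1) (Am : Set A) :=
          iSup_le fun m => iSup_le fun _ =>
            le_iSup (fun m => cornerSpace k (e j.1) (e m) (Ap : Set A)
              * cornerSpace k (e m) (e i.1) (Am : Set A)) m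
        exact hVgtleFull (hFmem (Θinv s))
      · rw [hUcorner j.1 i.1, Full_eq h j.1 i.1, Submodule.map_iSup]
        refine iSup_le fun m => ?_
        by_cases hm : l < deg m
        · rintro q ⟨x, hx, rfl⟩
          have hx' : x ∈ LinearMap.range F := by
            rw [hrangeF]
            exact hleVgt m hm hx
          obtain ⟨t, rfl⟩ := hx'
          exact ⟨Θ t, hsquare t⟩
        · rintro q ⟨x, hx, rfl⟩
          have hx0 : π.toLinearMap x = 0 :=
            (hπ0 _).2 (hPNIsub m (not_lt.1 hm) _ _ _ _ hx)
          rw [hx0]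
          exact Submodule.zero_mem _
  refine
    { idem := ?_
      orth := ?_
      complete := ?_
      memP := ?_
      memM := ?_
      diagP := ?_
      offP := ?_
      diagM := ?_
      offM := ?_
      mul_inj := fun i j => (hbig i j).1
      mul_range := fun i j => (hbig i j).2 }
  · intro i
    show π (e i.1) * π (e i.1) = π (e i.1)
    rw [← map_mul, h.idem i.1]
  · intro i j hne
    rw [← map_mul, h.orth i.1 j.1 (fun hEq => hne (Subtype.ext hEq)), map_zero]
  · have hsplit := Fintype.sum_subtype_add_sum_subtype (fun i : ι => l < deg i)
      (fun i => π (e i))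
    have h2 : ∑ i : {x : ι // ¬ l < deg x}, π (e i.1) = 0 :=
      Finset.sum_eq_zero fun i _ => hπe0 i.1 (not_lt.1 i.2)
    have h3 : ∑ i : ι, π (e i) = 1 := by rw [← map_sum, h.complete, map_one]
    rw [h2, add_zero, h3] at hsplit
    exact hsplit
  · intro i
    exact ⟨RingQuot.mkAlgHom k (idealRel (⟨ε, hP⟩ : Ap)) ⟨e i.1, h.memP i.1⟩, hφ _⟩
  · intro i
    exact ⟨RingQuot.mkAlgHom k (idealRel (⟨ε, hM⟩ : Am)) ⟨e i.1, h.memM i.1⟩, hψ _⟩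
  · intro i
    rw [hPcorner i.1 i.1, ← hrangeP i.1 i.1,
      ← LinearEquiv.finrank_eq (LinearEquiv.ofInjective _ (hkerP i.1 i.1 i.2))]
    exact h.diagP i.1
  · intro i j hne hbot
    refine h.offP i.1 j.1 (fun hEq => hne (Subtype.ext hEq)) (fun hb => hbot ?_)
    rw [hPcorner, hb, Submodule.map_bot]
  · intro i
    rw [hNcorner i.1 i.1, ← hrangeN i.1 i.1,
      ← LinearEquiv.finrank_eq (LinearEquiv.ofInjective _ (hkerN i.1 i.1 i.2))]
    exact h.diagM i.1
  · intro i j hne hbot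
    refine h.offM i.1 j.1 (fun hEq => hne (Subtype.ext hEq)) (fun hb => hbot ?_)
    rw [hNcorner, hb, Submodule.map_bot]
end

section
/- Let A be a finite-dimensional k-algebra satisfying the Setup, and let e be an idempotent of E of minimal degree and π : A⁺ → A⁺/A⁺εA⁺ the canonical surjection, where ε is the sum of all idempotents of minimal degree. Then for every idempotent η ∈ E of degree strictly greater than the minimum, ker(π)·η = A⁺εA⁺η = 0, hence right multiplication induces an isomorphism of left A⁺-modules (A⁺/A⁺εA⁺)η ≅ A⁺η. -/
open scoped TensorProduct DirectSum

set_option maxHeartbeats 1000000 in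
set_option synthInstance.maxHeartbeats 400000 in
/-- In the Setup, let `ε` be the sum of all idempotents of minimal degree
`t`, `K = A⁺εA⁺` the kernel of the canonical surjection `π : A⁺ → A⁺/A⁺εA⁺`, and `η` an
idempotent of degree `> t`. Then `K·η = 0`, and hence right multiplication induces an
isomorphism of left `A⁺`-modules `(A⁺/A⁺εA⁺)η ≅ A⁺η` (the quotient map is injective on
`A⁺η` with image `(A⁺/K)η`). -/
theorem setup_kernel_annihilates_higher_idempotent
    (k : Type*) [Field k] (A : Type*) [Ring A] [Algebra k A] [FiniteDimensional k A]
    {ι : Type*} [Fintype ι] [DecidableEq ι]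
    (e : ι → A) (deg : ι → ℕ) (Ap : Subalgebra k A)
    (hidem : ∀ i, IsIdempotentElem (e i))
    (horth : ∀ i j, i ≠ j → e i * e j = 0)
    (hcomplete : ∑ i, e i = 1)
    (hmem : ∀ i, e i ∈ Ap)
    (hdiag : ∀ i, Module.finrank k (cornerSpace k (e i) (e i) (Ap : Set A)) = 1)
    (hoff : ∀ i j, i ≠ j → cornerSpace k (e j) (e i) (Ap : Set A) ≠ ⊥ → deg i < deg j)
    (t : ℕ) (ht : ∀ i, t ≤ deg i)
    (ε : Ap) (hεdef : (ε : A) = ∑ i : {i : ι // deg i = t}, e i.1)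
    (i₀ : ι) (hi₀ : t < deg i₀) (η : Ap) (hη : (η : A) = e i₀)
    (K : Ideal Ap) (hK : K = Submodule.span Ap {y : Ap | ∃ b : Ap, y = ε * b}) :
    (∀ x ∈ K, x * η = 0) ∧
    Disjoint K (Submodule.span Ap ({η} : Set Ap)) ∧
    Nonempty ((Submodule.map K.mkQ (Submodule.span Ap ({η} : Set Ap))) ≃ₗ[Ap]
      (Submodule.span Ap ({η} : Set Ap))) := by
  -- Key: for every `b : Ap`, `ε * b * η = 0`.
  have hkey : ∀ b : Ap, ε * b * η = 0 := by
    intro b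
    apply Subtype.ext
    push_cast
    rw [hεdef, hη, Finset.sum_mul, Finset.sum_mul]
    apply Finset.sum_eq_zero
    rintro ⟨j, hj⟩ -
    by_contra h
    have hjne : j ≠ i₀ := by rintro rfl; omega
    have hmemc : e j * (b : A) * e i₀ ∈ cornerSpace k (e j) (e i₀) (Ap : Set A) :=
      Submodule.subset_span ⟨(b : A), b.2, rfl⟩
    have hne : cornerSpace k (e j) (e i₀) (Ap : Set A) ≠ ⊥ := by
      intro hbot
      exact h (by simpa [hbot] using hmemc)
    have := hoff i₀ j (Ne.symm hjne) hne
    omega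
  -- right multiplication by η as an Ap-linear map
  set g : Ap →ₗ[Ap] Ap := LinearMap.toSpanSingleton Ap Ap η with hg
  have hKg : K ≤ LinearMap.ker g := by
    rw [hK, Submodule.span_le]
    rintro y ⟨b, rfl⟩
    simp only [SetLike.mem_coe, LinearMap.mem_ker, hg, LinearMap.toSpanSingleton_apply,
      smul_eq_mul]
    exact hkey b
  have hann : ∀ x ∈ K, x * η = 0 := by
    intro x hx
    have := hKg hx
    rw [LinearMap.mem_ker, hg, LinearMap.toSpanSingleton_apply, smul_eq_mul] at this
    exact this
  have hηidem : η * η = η := by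
    apply Subtype.ext
    push_cast
    rw [hη]
    exact hidem i₀
  have hdisj : Disjoint K (Submodule.span Ap ({η} : Set Ap)) := by
    rw [Submodule.disjoint_def]
    intro x hxK hxS
    obtain ⟨a, rfl⟩ := Submodule.mem_span_singleton.mp hxS
    have h0 : (a • η) * η = 0 := hann _ hxK
    have : (a • η) * η = a • η := by
      rw [smul_eq_mul, mul_assoc, hηidem]
    rw [this] at h0
    exact h0
  refine ⟨hann, hdisj, ?_⟩
  set N := Submodule.span Ap ({η} : Set Ap)
  set f : N →ₗ[Ap] Ap ⧸ K := K.mkQ ∘ₗ N.subtype with hf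
  have hfinj : Function.Injective f := by
    rw [← LinearMap.ker_eq_bot]
    rw [Submodule.eq_bot_iff]
    rintro ⟨x, hx⟩ hker
    have : K.mkQ x = 0 := hker
    have hxK : x ∈ K := by rwa [← Submodule.Quotient.mk_eq_zero, ← Submodule.mkQ_apply]
    have hmem2 : x ∈ K ⊓ N := Submodule.mem_inf.mpr ⟨hxK, hx⟩
    rw [hdisj.eq_bot] at hmem2
    have hx0 : x = 0 := by simpa using hmem2
    exact Subtype.ext hx0
  have hrange : LinearMap.range f = Submodule.map K.mkQ N := by
    rw [hf, LinearMap.range_comp, Submodule.range_subtype]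
  exact ⟨(LinearEquiv.ofEq _ _ hrange.symm ≪≫ₗ
    (LinearEquiv.ofInjective f hfinj).symm)⟩
end

section
/- Let A = k[•→•] be the 2×2 upper triangular matrix algebra over a field k, with idempotents e₀ = E₁₁ (degree 0) and e₁ = E₂₂ (degree 1), and let S = A⁺ = A⁻ be the diagonal subalgebra k e₀ × k e₁. Then (A, A⁺, A⁻) is not Reedy (the multiplication map A⁺ ⊗_S A⁻ → A is not surjective), yet the multiplication map Ae₀ ⊗_{e₀Ae₀} e₀A → Ae₀A is bijective and both e₀Ae₀ ≅ k and A/Ae₀A ≅ k are Reedy algebras. -/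
open scoped TensorProduct DirectSum

/-- Let `A = k[• → •]` be the algebra of upper triangular `2 × 2`
matrices over `k`, presented by its basis `e₀ = E₁₁`, `e₁ = E₂₂`, `u = E₁₂`, with
`deg e₀ = 0`, `deg e₁ = 1`, and let `S = A⁺ = A⁻` be the diagonal subalgebra `k e₀ × k e₁`.
Then `(A, S, S)` is not Reedy (the multiplication map `A⁺ ⊗_S A⁻ → A` is not surjective),
yet the multiplication map `Ae₀ ⊗_{e₀Ae₀} e₀A → Ae₀A` is bijective (it has image `Ae₀A`
and kernel spanned by the balanced relations over `e₀Ae₀`), and both `e₀Ae₀ ≅ k` and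
`A/Ae₀A ≅ k` are one-dimensional, hence Reedy algebras. -/
theorem upper_triangular_counterexample
    (k : Type*) [Field k] (A : Type*) [Ring A] [Algebra k A] [FiniteDimensional k A]
    (e0 e1 u : A)
    (hi0 : e0 * e0 = e0) (hi1 : e1 * e1 = e1) (h01 : e0 * e1 = 0) (h10 : e1 * e0 = 0)
    (hsum : e0 + e1 = 1)
    (hu : u ≠ 0) (hu0 : e0 * u = u) (hu1 : u * e1 = u) (hu0' : u * e0 = 0)
    (hu1' : e1 * u = 0) (huu : u * u = 0)
    (hspan : Submodule.span k ({e0, e1, u} : Set A) = ⊤) (hdim : Module.finrank k A = 3)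
    (e : Fin 2 → A) (he : e = ![e0, e1]) (deg : Fin 2 → ℕ) (hdeg : deg = ![0, 1])
    (S : Subalgebra k A) (hS : S = Algebra.adjoin k {e0, e1}) :
    (¬ IsReedy k e deg S S) ∧
    (Submodule.span k {x : A | ∃ a ∈ S, ∃ b ∈ S, x = a * b} ≠ (⊤ : Submodule k A)) ∧
    (LinearMap.range (mulTensor k
        (Submodule.span k {x : A | ∃ a, x = a * e0})
        (Submodule.span k {x : A | ∃ b, x = e0 * b}))
      = Submodule.span k {x : A | ∃ a b, x = a * e0 * b}) ∧
    (LinearMap.ker (mulTensor k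
        (Submodule.span k {x : A | ∃ a, x = a * e0})
        (Submodule.span k {x : A | ∃ b, x = e0 * b}))
      = Submodule.span k {z : ↥(Submodule.span k {x : A | ∃ a, x = a * e0})
            ⊗[k] ↥(Submodule.span k {x : A | ∃ b, x = e0 * b}) |
          ∃ a x b : A,
            z = (⟨a * e0 * x * e0, Submodule.subset_span ⟨a * e0 * x, rfl⟩⟩ :
                  Submodule.span k {x : A | ∃ a, x = a * e0})
                ⊗ₜ[k] (⟨e0 * b, Submodule.subset_span ⟨b, rfl⟩⟩ :
                  Submodule.span k {x : A | ∃ b, x = e0 * b})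
              - (⟨a * e0, Submodule.subset_span ⟨a, rfl⟩⟩ :
                  Submodule.span k {x : A | ∃ a, x = a * e0})
                ⊗ₜ[k] (⟨e0 * (x * (e0 * b)), Submodule.subset_span ⟨x * (e0 * b), rfl⟩⟩ :
                  Submodule.span k {x : A | ∃ b, x = e0 * b})}) ∧
    (Module.finrank k (cornerSpace k e0 e0 Set.univ) = 1) ∧
    (Module.finrank k (A ⧸ Submodule.span k {x : A | ∃ a b, x = a * e0 * b}) = 1)
    := by
  classical
  -- e0 is nonzero
  have he0ne : e0 ≠ 0 := fun h => hu (by rw [← hu0, h, zero_mul])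
  -- every element of S is a diagonal combination
  have hSmem : ∀ s ∈ S, ∃ a b : k, s = a • e0 + b • e1 := by
    intro s hs
    rw [hS] at hs
    induction hs using Algebra.adjoin_induction with
    | mem x hx =>
      rcases hx with h | h
      · exact ⟨1, 0, by simp [h]⟩
      · exact ⟨0, 1, by simp [Set.mem_singleton_iff.mp h]⟩
    | algebraMap r =>
      exact ⟨r, r, by rw [Algebra.algebraMap_eq_smul_one, ← hsum, smul_add]⟩
    | add x y hx hy ihx ihy =>
      obtain ⟨a, b, rfl⟩ := ihx; obtain ⟨c, d, rfl⟩ := ihy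
      exact ⟨a + c, b + d, by rw [add_smul, add_smul]; abel⟩
    | mul x y hx hy ihx ihy =>
      obtain ⟨a, b, rfl⟩ := ihx; obtain ⟨c, d, rfl⟩ := ihy
      exact ⟨a * c, b * d, by
        simp only [mul_add, add_mul, smul_mul_assoc, mul_smul_comm, hi0, hi1, h01, h10,
          smul_smul, smul_zero, add_zero, zero_add]
        module⟩
  -- e0 * s * e1 = 0 for s ∈ S
  have hcorner01 : cornerSpace k e0 e1 (S : Set A) = ⊥ := by
    rw [cornerSpace, Submodule.span_eq_bot]
    rintro x ⟨s, hs, rfl⟩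
    obtain ⟨a, b, rfl⟩ := hSmem s hs
    simp [mul_add, add_mul, mul_smul_comm, smul_mul_assoc, hi0, hi1, h01, h10]
  have he0 : e 0 = e0 := by rw [he]; rfl
  have he1 : e 1 = e1 := by rw [he]; rfl
  -- multiplication with e0 on the right
  have hae0 : ∀ a : A, ∃ α : k, a * e0 = α • e0 := by
    intro a
    have ha : a ∈ Submodule.span k ({e0, e1, u} : Set A) := by rw [hspan]; trivial
    induction ha using Submodule.span_induction with
    | mem x hx =>
      rcases hx with h | h | h
      · exact ⟨1, by rw [h, hi0, one_smul]⟩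
      · exact ⟨0, by rw [h, h10, zero_smul]⟩
      · exact ⟨0, by rw [Set.mem_singleton_iff.mp h, hu0', zero_smul]⟩
    | zero => exact ⟨0, by rw [zero_mul, zero_smul]⟩
    | add x y hx hy ihx ihy =>
      obtain ⟨α, hα⟩ := ihx; obtain ⟨β, hβ⟩ := ihy
      exact ⟨α + β, by rw [add_mul, hα, hβ, add_smul]⟩
    | smul c x hx ih =>
      obtain ⟨α, hα⟩ := ih
      exact ⟨c * α, by rw [smul_mul_assoc, hα, smul_smul]⟩
  -- multiplication with e0 on the left lands in span {e0, u}
  have he0a : ∀ b : A, ∃ p r : k, e0 * b = p • e0 + r • u := by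
    intro b
    have hb : b ∈ Submodule.span k ({e0, e1, u} : Set A) := by rw [hspan]; trivial
    induction hb using Submodule.span_induction with
    | mem x hx =>
      rcases hx with h | h | h
      · exact ⟨1, 0, by rw [h, hi0]; simp⟩
      · exact ⟨0, 0, by rw [h, h01]; simp⟩
      · exact ⟨0, 1, by rw [Set.mem_singleton_iff.mp h, hu0]; simp⟩
    | zero => exact ⟨0, 0, by simp⟩
    | add x y hx hy ihx ihy =>
      obtain ⟨p, r, hp⟩ := ihx; obtain ⟨q, s, hq⟩ := ihy
      exact ⟨p + q, r + s, by rw [mul_add, hp, hq, add_smul, add_smul]; abel⟩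
    | smul c x hx ih =>
      obtain ⟨p, r, hp⟩ := ih
      exact ⟨c * p, c * r, by rw [mul_smul_comm, hp, smul_add, smul_smul, smul_smul]⟩
  -- membership facts for M = A·e0 and N = e0·A
  have hM : ∀ x ∈ Submodule.span k {x : A | ∃ a, x = a * e0}, ∃ a, x = a * e0 := by
    intro x hx
    induction hx using Submodule.span_induction with
    | mem x hx => exact hx
    | zero => exact ⟨0, (zero_mul e0).symm⟩
    | add x y hx hy ihx ihy =>
      obtain ⟨a, rfl⟩ := ihx; obtain ⟨b, rfl⟩ := ihy
      exact ⟨a + b, (add_mul a b e0).symm⟩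
    | smul c x hx ih =>
      obtain ⟨a, rfl⟩ := ih
      exact ⟨c • a, (smul_mul_assoc c a e0).symm⟩
  have hN : ∀ x ∈ Submodule.span k {x : A | ∃ b, x = e0 * b}, ∃ b, x = e0 * b := by
    intro x hx
    induction hx using Submodule.span_induction with
    | mem x hx => exact hx
    | zero => exact ⟨0, (mul_zero e0).symm⟩
    | add x y hx hy ihx ihy =>
      obtain ⟨a, rfl⟩ := ihx; obtain ⟨b, rfl⟩ := ihy
      exact ⟨a + b, (mul_add e0 a b).symm⟩
    | smul c x hx ih =>
      obtain ⟨b, rfl⟩ := ih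
      exact ⟨c • b, (mul_smul_comm c e0 b).symm⟩
  have he0M : e0 ∈ Submodule.span k {x : A | ∃ a, x = a * e0} :=
    Submodule.subset_span ⟨1, (one_mul e0).symm⟩
  have key : ∀ a b : A, (a * e0) * (e0 * b) = a * e0 * b := by
    intro a b
    rw [mul_assoc a e0, ← mul_assoc e0 e0, hi0, ← mul_assoc]
  have htmul : ∀ (m : ↥(Submodule.span k {x : A | ∃ a, x = a * e0}))
      (n : ↥(Submodule.span k {x : A | ∃ b, x = e0 * b})),
      mulTensor k _ _ (m ⊗ₜ[k] n) = (m : A) * (n : A) := fun m n => rfl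
  refine ⟨?_, ?_, ?_, ?_, ?_, ?_⟩
  · -- not Reedy
    intro h
    have hr := h.mul_range 1 0
    have hcomp : ∀ l : Fin 2,
        cornerSpace k (e 0) (e l) (S : Set A) = ⊥ ∨ cornerSpace k (e l) (e 1) (S : Set A) = ⊥ := by
      intro l
      match l with
      | 0 => exact Or.inr (by rw [he0, he1]; exact hcorner01)
      | 1 => exact Or.inl (by rw [he0, he1]; exact hcorner01)
    have hzero : reedyMulMap k e (S : Set A) (S : Set A) 0 1 = 0 := by
      refine DirectSum.linearMap_ext k fun l => ?_
      refine TensorProduct.ext' fun m n => ?_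
      simp only [LinearMap.comp_apply, LinearMap.zero_apply]
      rw [reedyMulMap, DirectSum.toModule_lof]
      have hmt : mulTensor k (cornerSpace k (e 0) (e l) (S : Set A))
          (cornerSpace k (e l) (e 1) (S : Set A)) (m ⊗ₜ[k] n) = (m : A) * (n : A) := rfl
      rcases hcomp l with hl | hl
      · have hm0 : (m : A) = 0 := (Submodule.eq_bot_iff _).mp hl _ m.2
        rw [hmt, hm0, zero_mul]
      · have hn0 : (n : A) = 0 := (Submodule.eq_bot_iff _).mp hl _ n.2
        rw [hmt, hn0, mul_zero]
    rw [hzero, LinearMap.range_zero, he0, he1] at hr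
    have humem : u ∈ cornerSpace k e0 e1 (Set.univ : Set A) :=
      Submodule.subset_span ⟨u, trivial, by rw [hu0, hu1]⟩
    rw [← hr, Submodule.mem_bot] at humem
    exact hu humem
  · -- products of S do not span A
    intro htop
    have humem : u ∈ Submodule.span k {x : A | ∃ a ∈ S, ∃ b ∈ S, x = a * b} := by
      rw [htop]; trivial
    have hle : Submodule.span k {x : A | ∃ a ∈ S, ∃ b ∈ S, x = a * b}
        ≤ Submodule.span k ({e0, e1} : Set A) := by
      rw [Submodule.span_le]
      rintro x ⟨a, ha, b, hb, rfl⟩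
      obtain ⟨p, q, rfl⟩ := hSmem a ha
      obtain ⟨r, s, rfl⟩ := hSmem b hb
      have h0 : e0 ∈ Submodule.span k ({e0, e1} : Set A) :=
        Submodule.subset_span (by simp)
      have h1 : e1 ∈ Submodule.span k ({e0, e1} : Set A) :=
        Submodule.subset_span (by simp)
      have : (p • e0 + q • e1) * (r • e0 + s • e1) = (p * r) • e0 + (q * s) • e1 := by
        simp only [mul_add, add_mul, smul_mul_assoc, mul_smul_comm, hi0, hi1, h01, h10,
          smul_smul, smul_zero, add_zero, zero_add]
        module
      rw [this]
      exact Submodule.add_mem _ (Submodule.smul_mem _ _ h0) (Submodule.smul_mem _ _ h1)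
    obtain ⟨c, d, hcd⟩ := Submodule.mem_span_pair.mp (hle humem)
    have : u = e0 * u * e1 := by rw [hu0, hu1]
    rw [this, ← hcd] at hu
    apply hu
    simp [mul_add, add_mul, mul_smul_comm, smul_mul_assoc, hi0, hi1, h01, h10]
  · -- range of mulTensor is A e0 A
    apply le_antisymm
    · rintro y ⟨t, rfl⟩
      induction t using TensorProduct.induction_on with
      | zero => simp
      | tmul m n =>
        obtain ⟨a, ha⟩ := hM m.1 m.2
        obtain ⟨b, hb⟩ := hN n.1 n.2
        rw [htmul, ha, hb, key]
        exact Submodule.subset_span ⟨a, b, rfl⟩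
      | add x y ihx ihy =>
        rw [map_add]
        exact Submodule.add_mem _ ihx ihy
    · rw [Submodule.span_le]
      rintro x ⟨a, b, rfl⟩
      exact ⟨(⟨a * e0, Submodule.subset_span ⟨a, rfl⟩⟩ : _) ⊗ₜ[k]
        (⟨e0 * b, Submodule.subset_span ⟨b, rfl⟩⟩ : _), by rw [htmul]; exact key a b⟩
  · -- kernel description
    have hrep : ∀ t : ↥(Submodule.span k {x : A | ∃ a, x = a * e0})
        ⊗[k] ↥(Submodule.span k {x : A | ∃ b, x = e0 * b}),
        ∃ n, t = (⟨e0, he0M⟩ : ↥(Submodule.span k {x : A | ∃ a, x = a * e0})) ⊗ₜ[k] n := by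
      intro t
      induction t using TensorProduct.induction_on with
      | zero => exact ⟨0, (TensorProduct.tmul_zero _ _).symm⟩
      | tmul m n =>
        obtain ⟨a, ha⟩ := hM m.1 m.2
        obtain ⟨α, hα⟩ := hae0 a
        have hm : m = α • (⟨e0, he0M⟩ : ↥(Submodule.span k {x : A | ∃ a, x = a * e0})) :=
          Subtype.ext (by rw [Submodule.coe_smul]; rw [ha]; exact hα)
        exact ⟨α • n, by rw [hm, TensorProduct.smul_tmul]⟩
      | add x y ihx ihy =>
        obtain ⟨n1, rfl⟩ := ihx; obtain ⟨n2, rfl⟩ := ihy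
        exact ⟨n1 + n2, (TensorProduct.tmul_add _ _ _).symm⟩
    have hNfix : ∀ x ∈ Submodule.span k {x : A | ∃ b, x = e0 * b}, e0 * x = x := by
      intro x hx
      obtain ⟨b, rfl⟩ := hN x hx
      rw [← mul_assoc, hi0]
    have hker : LinearMap.ker (mulTensor k
        (Submodule.span k {x : A | ∃ a, x = a * e0})
        (Submodule.span k {x : A | ∃ b, x = e0 * b})) = ⊥ := by
      rw [LinearMap.ker_eq_bot']
      intro t ht
      obtain ⟨n, rfl⟩ := hrep t
      rw [htmul] at ht
      have hn : (n : A) = 0 := by rw [← hNfix n.1 n.2]; exact ht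
      have : n = 0 := Subtype.ext hn
      rw [this, TensorProduct.tmul_zero]
    rw [hker]
    symm
    rw [Submodule.span_eq_bot]
    rintro z ⟨a, x, b, rfl⟩
    obtain ⟨α, hα⟩ := hae0 a
    obtain ⟨β, hβ⟩ := hae0 x
    have c1 : a * e0 * x * e0 = (α * β) • e0 := by
      rw [mul_assoc (a * e0) x e0, hβ, hα]
      simp only [smul_mul_assoc, mul_smul_comm, smul_smul, hi0]
      module
    have c3 : e0 * (x * (e0 * b)) = β • (e0 * b) := by
      rw [← mul_assoc e0 x (e0 * b), ← mul_assoc (e0 * x) e0 b, mul_assoc e0 x e0, hβ]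
      simp [mul_smul_comm, smul_mul_assoc, hi0]
    have t1eq : (⟨a * e0 * x * e0, Submodule.subset_span ⟨a * e0 * x, rfl⟩⟩ :
        Submodule.span k {x : A | ∃ a, x = a * e0})
        = (α * β) • ⟨e0, he0M⟩ := Subtype.ext (by rw [Submodule.coe_smul]; exact c1)
    have t2eq : (⟨e0 * (x * (e0 * b)), Submodule.subset_span ⟨x * (e0 * b), rfl⟩⟩ :
        Submodule.span k {x : A | ∃ b, x = e0 * b})
        = β • ⟨e0 * b, Submodule.subset_span ⟨b, rfl⟩⟩ :=
      Subtype.ext (by rw [Submodule.coe_smul]; exact c3)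
    have t3eq : (⟨a * e0, Submodule.subset_span ⟨a, rfl⟩⟩ :
        Submodule.span k {x : A | ∃ a, x = a * e0})
        = α • ⟨e0, he0M⟩ := Subtype.ext (by rw [Submodule.coe_smul]; exact hα)
    rw [t1eq, t2eq, t3eq, ← TensorProduct.smul_tmul', ← TensorProduct.smul_tmul',
      TensorProduct.tmul_smul, smul_smul, sub_self]
  · -- e0 A e0 is one-dimensional
    have hcc : cornerSpace k e0 e0 (Set.univ : Set A) = Submodule.span k {e0} := by
      apply le_antisymm
      · rw [cornerSpace, Submodule.span_le]
        rintro y ⟨a, -, rfl⟩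
        obtain ⟨α, hα⟩ := hae0 a
        have : e0 * a * e0 = α • (e0 * e0) := by rw [mul_assoc, hα, mul_smul_comm]
        rw [this, hi0]
        exact Submodule.smul_mem _ _ (Submodule.mem_span_singleton_self e0)
      · rw [Submodule.span_le, Set.singleton_subset_iff]
        exact Submodule.subset_span ⟨1, trivial, by rw [mul_one, hi0]⟩
    rw [hcc, finrank_span_singleton he0ne]
  · -- the quotient A / A e0 A is one-dimensional
    have hJ : Submodule.span k {x : A | ∃ a b, x = a * e0 * b}
        = Submodule.span k ({e0, u} : Set A) := by
      apply le_antisymm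
      · rw [Submodule.span_le]
        rintro y ⟨a, b, rfl⟩
        obtain ⟨α, hα⟩ := hae0 a
        obtain ⟨p, r, hpr⟩ := he0a b
        have : a * e0 * b = (α * p) • e0 + (α * r) • u := by
          rw [hα, smul_mul_assoc, hpr, smul_add, smul_smul, smul_smul]
        rw [this]
        exact Submodule.add_mem _
          (Submodule.smul_mem _ _ (Submodule.subset_span (by simp)))
          (Submodule.smul_mem _ _ (Submodule.subset_span (by simp)))
      · rw [Submodule.span_le]
        rintro y hy
        rcases hy with h | h
        · exact h ▸ Submodule.subset_span ⟨1, 1, by rw [one_mul, mul_one]⟩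
        · exact (Set.mem_singleton_iff.mp h) ▸
            Submodule.subset_span ⟨1, u, by rw [one_mul, hu0]⟩
    have hli : LinearIndependent k ![e0, u] := by
      rw [LinearIndependent.pair_iff]
      intro s t hst
      have h1 : s • e0 = 0 := by
        have := congrArg (· * e0) hst
        simpa [add_mul, smul_mul_assoc, hi0, hu0'] using this
      have hs : s = 0 := (smul_eq_zero.mp h1).resolve_right he0ne
      have h2 : t • u = 0 := by rw [hs, zero_smul, zero_add] at hst; exact hst
      exact ⟨hs, (smul_eq_zero.mp h2).resolve_right hu⟩
    have hrange : Set.range ![e0, u] = ({e0, u} : Set A) := by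
      simp [Matrix.range_cons, Matrix.range_empty, Set.pair_comm]
    have hJ2 : Module.finrank k (Submodule.span k ({e0, u} : Set A)) = 2 := by
      have := finrank_span_eq_card hli
      rw [hrange] at this
      simpa using this
    have hJrank : Module.finrank k (Submodule.span k {x : A | ∃ a b, x = a * e0 * b}) = 2 := by
      rw [hJ]; exact hJ2
    have hq := Submodule.finrank_quotient_add_finrank
      (Submodule.span k {x : A | ∃ a b, x = a * e0 * b})
    rw [hdim, hJrank] at hq
    omega
end

section
/- Let C be a finite-dimensional elementary k-algebra with maximal semisimple subalgebra S. Then the restriction to S of the canonical surjection C → C/rad(C) is an isomorphism, i.e., C = S ⊕ rad(C) as k-vector spaces. -/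
open scoped TensorProduct DirectSum

/-- A finite-dimensional `k`-algebra is elementary if its quotient by the Jacobson radical
is isomorphic to a finite product of copies of `k`. -/
def IsElementary (k : Type*) [Field k] (C : Type*) [Ring C] [Algebra k C] : Prop :=
  ∃ (m : ℕ) (φ : C →ₐ[k] (Fin m → k)), Function.Surjective φ ∧
    ∀ x, φ x = 0 ↔ x ∈ Ideal.jacobson (⊥ : Ideal C)


lemma aux_nilpotent_of_mem_jacobson {C : Type*} [Ring C] [IsArtinianRing C]
    {x : C} (hx : x ∈ Ideal.jacobson (⊥ : Ideal C)) : IsNilpotent x := by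
  have mono : ∀ n m : ℕ, n ≤ m → Ideal.span {x ^ m} ≤ Ideal.span {x ^ n} := by
    intro n m h
    rw [Ideal.span_le, Set.singleton_subset_iff]
    obtain ⟨d, rfl⟩ := Nat.exists_eq_add_of_le h
    exact Submodule.mem_span_singleton.2 ⟨x ^ d, by rw [smul_eq_mul, ← pow_add, add_comm]⟩
  obtain ⟨n, hn⟩ := IsArtinian.monotone_stabilizes
    (⟨fun n => Ideal.span {x ^ n}, fun a b h => mono a b h⟩ : ℕ →o (Ideal C)ᵒᵈ)
  have hmem : x ^ n ∈ Ideal.span {x ^ (n + 1)} := by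
    have := hn (n + 1) (Nat.le_succ n)
    change (Ideal.span {x ^ n} : Ideal C) = Ideal.span {x ^ (n + 1)} at this
    rw [← this]
    exact Ideal.subset_span rfl
  obtain ⟨c, hc⟩ := Submodule.mem_span_singleton.1 hmem
  rw [smul_eq_mul] at hc
  obtain ⟨z, hz⟩ := Ideal.mem_jacobson_iff.1 hx (-c)
  rw [Ideal.mem_bot, sub_eq_zero] at hz
  refine ⟨n, ?_⟩
  have h1 : z * x ^ n - z * c * (x * x ^ n) = x ^ n := by
    calc z * x ^ n - z * c * (x * x ^ n)
        = (z * -c * x + z) * x ^ n := by noncomm_ring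
      _ = x ^ n := by rw [hz, one_mul]
  rw [← pow_succ'] at h1
  rw [mul_assoc z c] at h1
  rw [hc] at h1
  rw [← sub_eq_zero, ← h1]
  abel

lemma aux_SJ {k C : Type*} [Field k] [Ring C] [Algebra k C] [IsArtinianRing C]
    (S : Subalgebra k C) (hS : IsSemisimpleRing ↥S) {x : C} (hxS : x ∈ S)
    (hxJ : x ∈ Ideal.jacobson (⊥ : Ideal C)) : x = 0 := by
  haveI := hS
  set J := Ideal.jacobson (⊥ : Ideal C) with hJ
  let I : Ideal ↥S :=
    { carrier := {y : ↥S | (y : C) ∈ J}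
      add_mem' := fun ha hb => J.add_mem ha hb
      zero_mem' := J.zero_mem
      smul_mem' := fun c y hy => by
        show ((c • y : ↥S) : C) ∈ J
        simpa only [smul_eq_mul, Subalgebra.coe_mul] using J.mul_mem_left (c : C) hy }
  obtain ⟨e, he, hIe⟩ := IsSemisimpleRing.ideal_eq_span_idempotent I
  have heI : e ∈ I := by rw [hIe]; exact Ideal.subset_span rfl
  have hce : IsIdempotentElem (e : C) := congrArg Subtype.val he
  have he0 : (e : C) = 0 := by
    obtain ⟨n, hn⟩ := aux_nilpotent_of_mem_jacobson (heI : (e : C) ∈ J)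
    calc (e : C) = (e : C) ^ (n + 1) := (hce.pow_succ_eq n).symm
      _ = (e : C) ^ n * e := pow_succ _ _
      _ = 0 := by rw [hn, zero_mul]
  have hebot : e = 0 := Subtype.ext he0
  have hI : I = ⊥ := by rw [hIe, hebot, Ideal.span_singleton_eq_bot.mpr rfl]
  have : (⟨x, hxS⟩ : ↥S) ∈ I := hxJ
  rw [hI, Ideal.mem_bot] at this
  exact congrArg Subtype.val this

lemma aux_indicator_mem {k : Type*} [Field k] {m : ℕ} (V : Subalgebra k (Fin m → k)) (i : Fin m) :
    ∃ u ∈ V, (∀ l, (∀ v ∈ V, v l = v i) → u l = 1) ∧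
      (∀ l, ¬(∀ v ∈ V, v l = v i) → u l = 0) := by
  classical
  have hch : ∀ j : Fin m, ∃ w, w ∈ V ∧ w i = 1 ∧ (¬(∀ v ∈ V, v j = v i) → w j = 0) := by
    intro j
    by_cases hj : ∀ v ∈ V, v j = v i
    · exact ⟨1, V.one_mem, rfl, fun h => absurd hj h⟩
    · push_neg at hj
      obtain ⟨v, hvV, hvij⟩ := hj
      have hne : v i - v j ≠ 0 := sub_ne_zero.mpr (Ne.symm hvij)
      refine ⟨(v i - v j)⁻¹ • (v - algebraMap k _ (v j)), V.smul_mem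
        (V.sub_mem hvV (V.algebraMap_mem _)) _, ?_, fun _ => ?_⟩
      · simp only [Pi.smul_apply, Pi.sub_apply, Pi.algebraMap_apply, Algebra.algebraMap_self,
          RingHom.id_apply, smul_eq_mul]
        exact inv_mul_cancel₀ hne
      · simp only [Pi.smul_apply, Pi.sub_apply, Pi.algebraMap_apply, Algebra.algebraMap_self,
          RingHom.id_apply, smul_eq_mul, sub_self, mul_zero]
  choose w hwV hwi hwj using hch
  set F : Finset (Fin m) := Finset.univ.filter (fun j => ¬(∀ v ∈ V, v j = v i)) with hF
  refine ⟨∏ j ∈ F, w j, Subalgebra.prod_mem V fun j _ => hwV j, ?_, ?_⟩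
  · intro l hl
    rw [Finset.prod_apply]
    exact Finset.prod_eq_one fun j hj => by rw [hl (w j) (hwV j), hwi j]
  · intro l hl
    rw [Finset.prod_apply]
    exact Finset.prod_eq_zero (Finset.mem_filter.2 ⟨Finset.mem_univ l, hl⟩) (hwj l hl)

/-- Let `C` be a finite-dimensional elementary `k`-algebra and `S` a
maximal semisimple subalgebra of `C`. Then the restriction to `S` of the canonical
surjection `C → C/rad(C)` is an isomorphism; equivalently, `C = S ⊕ rad(C)` as
`k`-vector spaces. -/
theorem elementary_wedderburn_splitting
    (k : Type*) [Field k] (C : Type*) [Ring C] [Algebra k C] [FiniteDimensional k C]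
    (helem : IsElementary k C)
    (S : Subalgebra k C) (hSsemi : IsSemisimpleRing ↥S)
    (hSmax : ∀ T : Subalgebra k C, S ≤ T → IsSemisimpleRing ↥T → T = S) :
    IsCompl (Subalgebra.toSubmodule S)
      (Submodule.restrictScalars k (Ideal.jacobson (⊥ : Ideal C))) := by
  classical
  obtain ⟨m, φ, hsurj, hker⟩ := helem
  haveI : IsArtinian k C := isArtinian_of_fg_of_artinian'
  haveI hart : IsArtinianRing C := isArtinian_of_tower k inferInstance
  have hSJ : ∀ x : C, x ∈ S → φ x = 0 → x = 0 := fun x hxS hx =>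
    aux_SJ S hSsemi hxS ((hker x).1 hx)
  have hVtop : S.map φ = ⊤ := by
    by_contra hV
    obtain ⟨i, j, hij, hj⟩ : ∃ i j : Fin m, i ≠ j ∧ ∀ v ∈ S.map φ, v j = v i := by
      by_contra h
      push_neg at h
      apply hV
      rw [eq_top_iff]
      intro x _
      have hsingle : ∀ i l : Fin m, (∀ v ∈ S.map φ, v l = v i) → l = i := by
        intro i l hl
        by_contra hli
        obtain ⟨v, hvV, hv⟩ := h i l (Ne.symm hli)
        exact hv (hl v hvV)
      choose u huV hu1 hu0 using fun i => aux_indicator_mem (S.map φ) i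
      have hx : x = ∑ i, x i • u i := by
        funext l
        rw [Finset.sum_apply, Finset.sum_eq_single l]
        · rw [Pi.smul_apply, hu1 l l (fun v _ => rfl), smul_eq_mul, mul_one]
        · intro b _ hb
          rw [Pi.smul_apply, hu0 b l (fun hc => hb (hsingle b l hc).symm), smul_eq_mul, mul_zero]
        · exact fun hl => absurd (Finset.mem_univ l) hl
      rw [hx]
      exact Subalgebra.sum_mem _ fun i _ => Subalgebra.smul_mem _ (huV i) _
    obtain ⟨u, huV, hu1, hu0⟩ := aux_indicator_mem (S.map φ) i
    obtain ⟨g, hgS, hgu⟩ := Subalgebra.mem_map.1 huV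
    set δ : Fin m → k := Pi.single i 1 with hδdef
    have hδi : δ i = 1 := Pi.single_eq_same i 1
    have hδ : ∀ l, l ≠ i → δ l = 0 := fun l hl => Pi.single_eq_of_ne hl 1
    have hji : j ≠ i := Ne.symm hij
    have hui : u i = 1 := hu1 i (fun v _ => rfl)
    have huu : u * u = u := by
      funext l
      by_cases hl : ∀ v ∈ S.map φ, v l = v i
      · simp [Pi.mul_apply, hu1 l hl]
      · simp [Pi.mul_apply, hu0 l hl]
    have hg2 : g * g = g := by
      have hm : g * g - g ∈ S := S.sub_mem (S.mul_mem hgS hgS) hgS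
      have h0 : φ (g * g - g) = 0 := by rw [map_sub, map_mul, hgu, huu, sub_self]
      exact sub_eq_zero.mp (hSJ _ hm h0)
    have hgs : ∀ s ∈ S, s * g = φ s i • g ∧ g * s = φ s i • g := by
      intro s hsS
      have hφs : φ s ∈ S.map φ := Subalgebra.mem_map.2 ⟨s, hsS, rfl⟩
      have key : φ s * u = φ s i • u := by
        funext l
        by_cases hl : ∀ v ∈ S.map φ, v l = v i
        · rw [Pi.mul_apply, Pi.smul_apply, hu1 l hl, smul_eq_mul, mul_one, mul_one, hl (φ s) hφs]
        · rw [Pi.mul_apply, Pi.smul_apply, hu0 l hl, smul_eq_mul, mul_zero, mul_zero]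
      constructor
      · have hm : s * g - φ s i • g ∈ S := S.sub_mem (S.mul_mem hsS hgS) (S.smul_mem hgS _)
        have h0 : φ (s * g - φ s i • g) = 0 := by
          rw [map_sub, map_mul, map_smul, hgu, key, sub_self]
        exact sub_eq_zero.mp (hSJ _ hm h0)
      · have hm : g * s - φ s i • g ∈ S := S.sub_mem (S.mul_mem hgS hsS) (S.smul_mem hgS _)
        have h0 : φ (g * s - φ s i • g) = 0 := by
          rw [map_sub, map_mul, map_smul, hgu, mul_comm u (φ s), key, sub_self]
        exact sub_eq_zero.mp (hSJ _ hm h0)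
    obtain ⟨c, hc⟩ := hsurj δ
    set a := g * c * g with ha
    have hφa : φ a = δ := by
      rw [ha, map_mul, map_mul, hgu, hc]
      funext l
      by_cases hl : l = i
      · subst hl; rw [Pi.mul_apply, Pi.mul_apply, hui, hδi, one_mul, mul_one]
      · rw [Pi.mul_apply, Pi.mul_apply, hδ l hl, mul_zero, zero_mul]
    have hga1 : g * a = a := by rw [ha, ← mul_assoc, ← mul_assoc, hg2]
    have hga2 : a * g = a := by rw [ha, mul_assoc, hg2]
    have has : ∀ s ∈ S, s * a = a * s := by
      intro s hsS
      obtain ⟨h1, h2⟩ := hgs s hsS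
      have hsa : s * a = φ s i • a := by
        have hh : s * (g * c * g) = ((s * g) * c) * g := by noncomm_ring
        rw [ha, hh, h1, smul_mul_assoc, smul_mul_assoc]
      have hass : a * s = φ s i • a := by
        have hh : (g * c * g) * s = (g * c) * (g * s) := by noncomm_ring
        rw [ha, hh, h2, mul_smul_comm]
      rw [hsa, hass]
    set B := Algebra.adjoin k ({a} : Set C) with hB
    let ψ : ↥B →+* (Fin m → k) := (φ.comp (Subalgebra.val B)).toRingHom
    have hψ : ∀ y : ↥B, ψ y = φ (y : C) := fun y => rfl
    have hkerψ : ∀ y ∈ RingHom.ker ψ, IsNilpotent y := by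
      intro y hy
      rw [RingHom.mem_ker] at hy
      obtain ⟨n, hn⟩ := aux_nilpotent_of_mem_jacobson ((hker _).1 ((hψ y) ▸ hy))
      exact ⟨n, Subtype.ext (by rw [SubmonoidClass.coe_pow]; simpa using hn)⟩
    have hδidem : IsIdempotentElem δ := by
      show δ * δ = δ
      funext l
      by_cases hl : l = i
      · subst hl; rw [Pi.mul_apply, hδi, mul_one]
      · rw [Pi.mul_apply, hδ l hl, mul_zero]
    obtain ⟨f', hf'idem, hf'⟩ := exists_isIdempotentElem_eq_of_ker_isNilpotent ψ hkerψ δ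
      ⟨⟨a, Algebra.self_mem_adjoin_singleton k a⟩, hφa⟩ hδidem
    set f₀ := (f' : C) with hf₀def
    have hφf₀ : φ f₀ = δ := hf'
    have hf₀2 : f₀ * f₀ = f₀ := congrArg Subtype.val hf'idem
    have hcen : ∀ y ∈ (↑S ∪ {g} : Set C), y * f₀ = f₀ * y := by
      have hBle : B ≤ Subalgebra.centralizer k (↑S ∪ {g} : Set C) := by
        rw [hB]
        apply Algebra.adjoin_le
        rintro x hx
        rw [Set.mem_singleton_iff] at hx; subst hx
        refine (Subalgebra.mem_centralizer_iff k).2 ?_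
        rintro y (hy | hy)
        · exact has y hy
        · rw [Set.mem_singleton_iff] at hy; subst hy; rw [hga1, hga2]
      exact (Subalgebra.mem_centralizer_iff k).1 (hBle f'.2)
    set f := g * f₀ with hf
    have hf2 : f * f = f := by
      have h := hcen g (Or.inr rfl)
      calc f * f = g * (f₀ * g) * f₀ := by rw [hf]; noncomm_ring
        _ = g * (g * f₀) * f₀ := by rw [← h]
        _ = f := by rw [← mul_assoc, hg2, mul_assoc, hf₀2, hf]
    have hφf : φ f = δ := by
      rw [hf, map_mul, hgu, hφf₀]
      funext l
      by_cases hl : l = i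
      · subst hl; rw [Pi.mul_apply, hui, one_mul]
      · rw [Pi.mul_apply, hδ l hl, mul_zero]
    have hsf : ∀ s ∈ S, s * f = φ s i • f ∧ f * s = φ s i • f := by
      intro s hsS
      obtain ⟨h1, h2⟩ := hgs s hsS
      constructor
      · rw [hf, ← mul_assoc, h1, smul_mul_assoc]
      · rw [hf, mul_assoc, ← hcen s (Or.inl hsS), ← mul_assoc, h2, smul_mul_assoc]
    set M : Submodule k C := Subalgebra.toSubmodule S ⊔ Submodule.span k {f} with hM
    have hmemM : ∀ x : C, x ∈ M ↔ ∃ s ∈ S, ∃ t : k, x = s + t • f := by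
      intro x
      rw [hM, Submodule.mem_sup]
      constructor
      · rintro ⟨s, hs, y, hy, rfl⟩
        obtain ⟨t, rfl⟩ := Submodule.mem_span_singleton.1 hy
        exact ⟨s, hs, t, rfl⟩
      · rintro ⟨s, hs, t, rfl⟩
        exact ⟨s, hs, t • f, Submodule.mem_span_singleton.2 ⟨t, rfl⟩, rfl⟩
    have hprod : ∀ (s s' : C), s ∈ S → s' ∈ S → ∀ t t' : k,
        (s + t • f) * (s' + t' • f) = s * s' + (t' * φ s i + t * φ s' i + t * t') • f := by
      intro s s' hs hs' t t'
      obtain ⟨h1, _⟩ := hsf s hs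
      obtain ⟨_, h2⟩ := hsf s' hs'
      rw [mul_add, add_mul, add_mul, mul_smul_comm, h1, smul_mul_assoc, h2, smul_mul_assoc,
        mul_smul_comm, hf2, smul_smul, smul_smul, smul_smul, add_smul, add_smul]
      abel
    have honeM : (1 : C) ∈ M := (hmemM 1).2 ⟨1, S.one_mem, 0, by simp⟩
    have hmulM : ∀ x y, x ∈ M → y ∈ M → x * y ∈ M := by
      intro x y hx hy
      obtain ⟨s, hs, t, rfl⟩ := (hmemM x).1 hx
      obtain ⟨s', hs', t', rfl⟩ := (hmemM y).1 hy
      rw [hprod s s' hs hs' t t']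
      exact (hmemM _).2 ⟨s * s', S.mul_mem hs hs', _, rfl⟩
    set T := M.toSubalgebra honeM hmulM with hT
    have hST : S ≤ T := fun x hx => Submodule.mem_sup_left hx
    have hTJ : ∀ x ∈ M, φ x = 0 → x = 0 := by
      intro x hx h0
      obtain ⟨s, hs, t, rfl⟩ := (hmemM x).1 hx
      rw [map_add, map_smul, hφf] at h0
      have hsj : φ s j = 0 := by
        have h := congrFun h0 j
        rw [Pi.add_apply, Pi.smul_apply, hδ j hji, smul_zero, add_zero] at h
        exact h
      have hsi : φ s i = 0 := by
        have h := hj (φ s) (Subalgebra.mem_map.2 ⟨s, hs, rfl⟩)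
        rw [← h]; exact hsj
      have ht : t = 0 := by
        have h := congrFun h0 i
        rw [Pi.add_apply, Pi.smul_apply, hδi, smul_eq_mul, mul_one, hsi, zero_add] at h
        exact h
      have hs0 : φ s = 0 := by
        rw [ht, zero_smul, add_zero] at h0; exact h0
      rw [ht, zero_smul, add_zero]
      exact hSJ s hs hs0
    have hScomm : ∀ s ∈ S, ∀ s' ∈ S, s * s' = s' * s := by
      intro s hs s' hs'
      have hm : s * s' - s' * s ∈ S := S.sub_mem (S.mul_mem hs hs') (S.mul_mem hs' hs)
      have h0 : φ (s * s' - s' * s) = 0 := by rw [map_sub, map_mul, map_mul, mul_comm, sub_self]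
      exact sub_eq_zero.mp (hSJ _ hm h0)
    letI : CommRing ↥T := { (inferInstance : Ring ↥T) with
      mul_comm := by
        rintro ⟨x, hx⟩ ⟨y, hy⟩
        apply Subtype.ext
        show x * y = y * x
        have hx' : x ∈ M := hx
        have hy' : y ∈ M := hy
        obtain ⟨s, hs, t, rfl⟩ := (hmemM x).1 hx'
        obtain ⟨s', hs', t', rfl⟩ := (hmemM y).1 hy'
        rw [hprod s s' hs hs' t t', hprod s' s hs' hs t' t, hScomm s hs s' hs']
        have he : t' * φ s i + t * φ s' i + t * t' = t * φ s' i + t' * φ s i + t' * t := by ring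
        rw [he] }
    haveI : FiniteDimensional k ↥T := inferInstance
    haveI : IsArtinian k ↥T := isArtinian_of_fg_of_artinian'
    haveI : IsArtinianRing ↥T := isArtinian_of_tower k inferInstance
    haveI : IsReduced ↥T := by
      constructor
      rintro ⟨x, hx⟩ hnil
      obtain ⟨n, hn⟩ := hnil
      have hxn : x ^ n = 0 := congrArg Subtype.val hn
      have hφx : IsNilpotent (φ x) := ⟨n, by rw [← map_pow, hxn, map_zero]⟩
      exact Subtype.ext (hTJ x hx hφx.eq_zero)
    have hTss : IsSemisimpleRing ↥T := IsArtinianRing.isSemisimpleRing_of_isReduced ↥T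
    have hTS : T = S := hSmax T hST hTss
    have hfT : f ∈ T := (hmemM f).2 ⟨0, S.zero_mem, 1, by rw [one_smul, zero_add]⟩
    have hfS : f ∈ S := hTS ▸ hfT
    have hδV : δ ∈ S.map φ := ⟨f, hfS, hφf⟩
    have hcontra := hj δ hδV
    rw [hδ j hji, hδi] at hcontra
    exact zero_ne_one hcontra
  constructor
  · exact Submodule.disjoint_def.mpr fun x hxS hxJ => aux_SJ S hSsemi hxS hxJ
  · rw [codisjoint_iff, eq_top_iff]
    intro c _
    have hc : φ c ∈ S.map φ := hVtop ▸ Algebra.mem_top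
    obtain ⟨s, hsS, hs⟩ := Subalgebra.mem_map.1 hc
    refine Submodule.mem_sup.2 ⟨s, hsS, c - s, ?_, by abel⟩
    show c - s ∈ Ideal.jacobson (⊥ : Ideal C)
    exact (hker _).1 (by rw [map_sub, hs, sub_self])
end
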